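/- arXiv:1910.06871 — 2 statements merged into one kernel-verified Lean document; each statement's English description precedes it below -/
import Mathlib

section
/- The ordinary generating function Q_2(z) = Σ_{n≥0} Q_2(n) z^n of modular noncrossing diagrams (the case k = 2) satisfies, as an identity of formal power series, Q_2(z) = (1 − z² + z⁴) · p(z)^{−1} · F_2(ϑ_2(z)), where p(z) = 1 − z − z² + z³ + 2z⁴ + z⁶ (invertible since p(0) = 1), ϑ_2(z) = (z⁴ − z⁶ + z⁸) · p(z)^{−2} is a formal power series with zero constant term, and F_2(z) = Σ_{n≥0} C_n z^n is the generating function of the Catalan numbers C_n (equivalently, of 2-noncrossing perfect matchings). -/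
open scoped Classical

noncomputable section

/-- A diagram on `n` vertices: a set of arcs `(i,j)` with `1 ≤ i < j ≤ n`
in which each vertex belongs to at most one arc. -/
structure Diagram (n : ℕ) where
  arcs : Finset (ℕ × ℕ)
  valid : ∀ a ∈ arcs, 1 ≤ a.1 ∧ a.1 < a.2 ∧ a.2 ≤ n
  disj : ∀ a ∈ arcs, ∀ b ∈ arcs, a ≠ b →
    a.1 ≠ b.1 ∧ a.1 ≠ b.2 ∧ a.2 ≠ b.1 ∧ a.2 ≠ b.2

namespace Diagram

variable {n : ℕ}

/-- `D` contains a `k`-crossing: arcs `(i₁,j₁),…,(i_k,j_k)` with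
`i₁ < i₂ < ⋯ < i_k < j₁ < j₂ < ⋯ < j_k`. -/
def HasCrossing (D : Diagram n) (k : ℕ) : Prop :=
  ∃ a : Fin k → ℕ × ℕ, (∀ t, a t ∈ D.arcs) ∧
    (∀ s t : Fin k, s < t → (a s).1 < (a t).1) ∧
    (∀ s t : Fin k, s < t → (a s).2 < (a t).2) ∧
    (∀ s t : Fin k, (a s).1 < (a t).2)

/-- `D` is `k`-noncrossing: it has no `k`-crossing. -/
def Noncrossing (k : ℕ) (D : Diagram n) : Prop := ¬ D.HasCrossing k

/-- `D` is a perfect matching: it has no isolated vertices. -/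
def Perfect (D : Diagram n) : Prop :=
  ∀ v : ℕ, 1 ≤ v → v ≤ n → ∃ a ∈ D.arcs, v = a.1 ∨ v = a.2

/-- `(i,j),(i+1,j-1),…,(i+σ-1,j-σ+1)` is a (maximal) stack of size `σ` in `D`. -/
def IsStack (D : Diagram n) (i j σ : ℕ) : Prop :=
  0 < σ ∧ (∀ t < σ, (i + t, j - t) ∈ D.arcs) ∧
    (i - 1, j + 1) ∉ D.arcs ∧ (i + σ, j - σ) ∉ D.arcs

/-- Every stack of `D` has size at least `τ`. -/
def MinStack (τ : ℕ) (D : Diagram n) : Prop :=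
  ∀ i j σ : ℕ, D.IsStack i j σ → τ ≤ σ

/-- Every arc of `D` has length at least `lam`. -/
def MinArcLength (lam : ℕ) (D : Diagram n) : Prop :=
  ∀ a ∈ D.arcs, lam ≤ a.2 - a.1

/-- A modular `k`-noncrossing diagram: `k`-noncrossing, every stack has size at least 2,
and every arc has length at least 4. -/
def Modular (k : ℕ) (D : Diagram n) : Prop :=
  D.Noncrossing k ∧ MinStack 2 D ∧ MinArcLength 4 D

/-- Two arcs cross (i.e. form a 2-crossing). -/
def Crosses (a b : ℕ × ℕ) : Prop :=
  (a.1 < b.1 ∧ b.1 < a.2 ∧ a.2 < b.2) ∨ (b.1 < a.1 ∧ a.1 < b.2 ∧ b.2 < a.2)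

/-- The number of 1-arcs (arcs of length 1) of `D`. -/
def oneArcs (D : Diagram n) : ℕ :=
  (D.arcs.filter fun a => a.2 = a.1 + 1).card

/-- The number of pairs of mutually crossing 2-arcs of `D` (`C₂`-elements). -/
def twoArcCrossPairs (D : Diagram n) : ℕ :=
  ((D.arcs ×ˢ D.arcs).filter fun p =>
    p.1.2 = p.1.1 + 2 ∧ p.2.2 = p.2.1 + 2 ∧ p.1.1 < p.2.1 ∧ Crosses p.1 p.2).card

/-- The number of `C₃`-elements of `D`: pairs `(α,β)` where `α` is the unique 2-arc
crossing `β` and `β` has length at least 3. -/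
def c3count (D : Diagram n) : ℕ :=
  (D.arcs.filter fun b => 3 ≤ b.2 - b.1 ∧
    ∃! a : ℕ × ℕ, a ∈ D.arcs ∧ a.2 = a.1 + 2 ∧ Crosses a b).card

/-- The number of `C₄`-elements of `D`: triples `(α₁,β,α₂)` where `α₁ ≠ α₂` are
2-arcs crossing `β`. -/
def c4count (D : Diagram n) : ℕ :=
  (D.arcs.filter fun b => ∃ a₁ ∈ D.arcs, ∃ a₂ ∈ D.arcs, a₁ ≠ a₂ ∧
    a₁.2 = a₁.1 + 2 ∧ a₂.2 = a₂.1 + 2 ∧ Crosses a₁ b ∧ Crosses a₂ b).card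

/-- A `V_k`-shape: a `k`-noncrossing perfect matching all of whose stacks have
size exactly 1. -/
def IsShape (k : ℕ) (D : Diagram n) : Prop :=
  D.Noncrossing k ∧ D.Perfect ∧ ∀ i j σ : ℕ, D.IsStack i j σ → σ = 1

/-- The dependency graph of `D`: one vertex per arc, two vertices adjacent iff the
corresponding arcs cross. -/
def depGraph (D : Diagram n) : SimpleGraph {a : ℕ × ℕ // a ∈ D.arcs} :=
  SimpleGraph.fromRel fun a b => Crosses a.1 b.1

/-- A skeleton diagram: every arc crosses some other arc and the dependency
graph is connected. -/
def IsSkeleton (D : Diagram n) : Prop :=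
  (∀ a ∈ D.arcs, ∃ b ∈ D.arcs, Crosses a b) ∧ D.depGraph.Connected

/-- `D` is irreducible: no vertex `ℓ` splits the arc set into two nonempty parts
`{(i,j) : j < ℓ}` and `{(i,j) : i ≥ ℓ}` covering all arcs. -/
def Irreducible (D : Diagram n) : Prop :=
  ¬ ∃ ℓ : ℕ, (∃ a ∈ D.arcs, a.2 < ℓ) ∧ (∃ a ∈ D.arcs, ℓ ≤ a.1) ∧
      ∀ a ∈ D.arcs, a.2 < ℓ ∨ ℓ ≤ a.1

/-- A canonical 3-noncrossing skeleton diagram: a 3-noncrossing skeleton diagram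
in which every stack has size at least 3 and every arc has length at least 4. -/
def CanonicalSkeleton (D : Diagram n) : Prop :=
  D.Noncrossing 3 ∧ D.IsSkeleton ∧ MinStack 3 D ∧ MinArcLength 4 D

end Diagram

/-- `Qcount k n` : the number of modular `k`-noncrossing diagrams on `n` vertices. -/
def Qcount (k n : ℕ) : ℕ := Nat.card {D : Diagram n // D.Modular k}

/-- `fMatch k n = f_k(2n,0)` : the number of `k`-noncrossing perfect matchings
on `2n` vertices. -/
def fMatch (k n : ℕ) : ℕ :=
  Nat.card {D : Diagram (2 * n) // D.Noncrossing k ∧ D.Perfect}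

/-- `F_k(z) = Σ_{n ≥ 0} f_k(2n,0) zⁿ`. -/
def Fgf (k : ℕ) : PowerSeries ℚ := PowerSeries.mk fun n => (fMatch k n : ℚ)

/-- `icount2 k s m = i_k(s,m)` : the number of `V_k`-shapes with `s` arcs and
`m` 1-arcs. -/
def icount2 (k s m : ℕ) : ℕ :=
  Nat.card {D : Diagram (2 * s) // D.IsShape k ∧ D.oneArcs = m}

/-- `icount3 k s u₁ u₂ = i_k(s,u₁,u₂)` : the number of `V_k`-shapes with `s` arcs,
`u₁` 1-arcs and `u₂` pairs of mutually crossing 2-arcs. -/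
def icount3 (k s u₁ u₂ : ℕ) : ℕ :=
  Nat.card {D : Diagram (2 * s) // D.IsShape k ∧ D.oneArcs = u₁ ∧
    D.twoArcCrossPairs = u₂}

/-- `icount5 k s u₁ u₂ u₃ u₄ = i_k(s,u₁,u₂,u₃,u₄)` : the number of `V_k`-shapes with
`s` arcs and `uᵢ` `Cᵢ`-elements for `i = 1,2,3,4`. -/
def icount5 (k s u₁ u₂ u₃ u₄ : ℕ) : ℕ :=
  Nat.card {D : Diagram (2 * s) // D.IsShape k ∧ D.oneArcs = u₁ ∧
    D.twoArcCrossPairs = u₂ ∧ D.c3count = u₃ ∧ D.c4count = u₄}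

/-- `S(h)` : the number of 3-noncrossing skeleton perfect matchings with `h` arcs,
with the convention `S(0) = S(1) = 1`. -/
def Scount (h : ℕ) : ℕ :=
  if h ≤ 1 then 1
  else Nat.card {D : Diagram (2 * h) // D.Noncrossing 3 ∧ D.Perfect ∧ D.IsSkeleton}

/-- `S(y) = Σ_{h ≥ 0} S(h) y^h`. -/
def Sgf : PowerSeries ℚ := PowerSeries.mk fun h => (Scount h : ℚ)

/-- `Irr(h)` : the number of irreducible 3-noncrossing perfect matchings with `h` arcs. -/
def IrrCount (h : ℕ) : ℕ :=
  Nat.card {D : Diagram (2 * h) // D.Noncrossing 3 ∧ D.Perfect ∧ D.Irreducible}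

/-- `S3^[4](n)` : the number of canonical 3-noncrossing skeleton diagrams on `n`
vertices. -/
def S34count (n : ℕ) : ℕ := Nat.card {D : Diagram n // D.CanonicalSkeleton}

/-- `A(n,h)` : the number of canonical 3-noncrossing skeleton diagrams on `n`
vertices having exactly `h` arcs. -/
def Acount (n h : ℕ) : ℕ :=
  Nat.card {D : Diagram n // D.CanonicalSkeleton ∧ D.arcs.card = h}

/-- Substitution `f(g)` of a power series `g` with zero constant term into a
power series `f`, defined coefficientwise by (finite) sums. -/
def substPS (g f : PowerSeries ℚ) : PowerSeries ℚ :=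
  PowerSeries.mk fun n => ∑ m ∈ Finset.range (n + 1),
    (PowerSeries.coeff m f) * (PowerSeries.coeff n (g ^ m))

/-- Substitution `f(g)` of a multivariate power series `g` with zero constant term
into a univariate power series `f`, defined coefficientwise by (finite) sums. -/
def substMv {σ : Type*} (g : MvPowerSeries σ ℚ) (f : PowerSeries ℚ) :
    MvPowerSeries σ ℚ :=
  fun d => ∑ m ∈ Finset.range ((∑ i ∈ d.support, d i) + 1),
    (PowerSeries.coeff m f) * (MvPowerSeries.coeff d (g ^ m))

end

/-! ### Auxiliary development -/

noncomputable section AuxDev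

namespace Diagram

variable {n : ℕ}

lemma ext' {n : ℕ} {D E : Diagram n} (h : D.arcs = E.arcs) : D = E := by
  cases D; cases E; simp only at h; subst h; rfl

instance : Finite (Diagram n) := by
  apply Finite.of_injective
    (fun D : Diagram n =>
      (⟨D.arcs, by
        rw [Finset.mem_powerset]
        intro a ha
        have := D.valid a ha
        simp only [Finset.mem_product, Finset.mem_range]
        omega⟩ :
        ((Finset.range (n+1) ×ˢ Finset.range (n+1)).powerset : Finset (Finset (ℕ × ℕ)))))
  intro D E h
  exact ext' (congrArg Subtype.val h)

/-- Pairwise reformulation of 2-noncrossing. -/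
def NC2 (D : Diagram n) : Prop :=
  ∀ a ∈ D.arcs, ∀ b ∈ D.arcs, ¬ (a.1 < b.1 ∧ b.1 < a.2 ∧ a.2 < b.2)

lemma noncrossing_two_iff (D : Diagram n) : D.Noncrossing 2 ↔ D.NC2 := by
  constructor
  · intro h a ha b hb hab
    exact h ⟨![a, b], by
      refine ⟨?_, ?_, ?_, ?_⟩
      · intro t; fin_cases t <;> simpa
      · intro s t hst
        fin_cases s <;> fin_cases t <;> simp_all <;> omega
      · intro s t hst
        fin_cases s <;> fin_cases t <;> simp_all <;> omega
      · have h1 := (D.valid a ha).2.1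
        have h2 := (D.valid b hb).2.1
        intro s t; fin_cases s <;> fin_cases t <;> simp <;> omega⟩
  · rintro h ⟨f, hf, h1, h2, h3⟩
    have ha := hf 0
    have hb := hf 1
    exact h _ ha _ hb ⟨h1 0 1 (by norm_num), h3 1 0, h2 0 1 (by norm_num)⟩

/-- Local reformulation of the minimum-stack-size-2 condition. -/
def Local2 (D : Diagram n) : Prop :=
  ∀ a ∈ D.arcs, (a.1 - 1, a.2 + 1) ∉ D.arcs → (a.1 + 1, a.2 - 1) ∈ D.arcs

lemma minStack_two_iff (D : Diagram n) : MinStack 2 D ↔ D.Local2 := by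
  constructor
  · intro h a ha hnot
    classical
    set P : ℕ → Prop := fun t => ∀ t' < t, (a.1 + t', a.2 - t') ∈ D.arcs with hP
    have hP1 : P 1 := by
      intro t' ht'
      interval_cases t'
      simpa using ha
    have hle : 1 ≤ a.2 := by have := (D.valid a ha).2.1; omega
    set σ := Nat.findGreatest P a.2 with hσ
    have hσ1 : 1 ≤ σ := Nat.le_findGreatest hle hP1
    have hPσ : P σ := Nat.findGreatest_spec hle hP1
    have hstack : D.IsStack a.1 a.2 σ := by
      refine ⟨hσ1, hPσ, by simpa using hnot, ?_⟩
      intro hmem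
      by_cases hb : σ + 1 ≤ a.2
      · have : ¬ P (σ + 1) := Nat.findGreatest_is_greatest (by omega) hb
        apply this
        intro t' ht'
        rcases Nat.lt_succ_iff_lt_or_eq.mp ht' with h' | h'
        · exact hPσ t' h'
        · subst h'; exact hmem
      · have hv := D.valid _ hmem
        omega
    have h2 := h _ _ _ hstack
    have := hPσ 1 (by omega)
    simpa using this
  · rintro h i j σ ⟨hσ, harcs, htop, hbot⟩
    by_contra hcon
    have hσ1 : σ = 1 := by omega
    have ha : (i, j) ∈ D.arcs := by simpa using harcs 0 hσ
    have := h (i, j) ha (by simpa using htop)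
    rw [hσ1] at hbot
    exact hbot this

lemma modular_two_iff (D : Diagram n) :
    D.Modular 2 ↔ D.NC2 ∧ D.Local2 ∧ MinArcLength 4 D := by
  unfold Modular
  rw [noncrossing_two_iff, minStack_two_iff]

lemma fst_pos {D : Diagram n} {a : ℕ × ℕ} (ha : a ∈ D.arcs) : 1 ≤ a.1 := (D.valid a ha).1
lemma fst_lt_snd {D : Diagram n} {a : ℕ × ℕ} (ha : a ∈ D.arcs) : a.1 < a.2 :=
  (D.valid a ha).2.1
lemma snd_le {D : Diagram n} {a : ℕ × ℕ} (ha : a ∈ D.arcs) : a.2 ≤ n :=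
  (D.valid a ha).2.2

end Diagram

end AuxDev
noncomputable section AuxDev2

open Diagram

/-- Shift all arcs up by `c`. -/
def upArcs (c : ℕ) (s : Finset (ℕ × ℕ)) : Finset (ℕ × ℕ) :=
  s.image fun a => (a.1 + c, a.2 + c)

/-- Shift all arcs down by `c`. -/
def downArcs (c : ℕ) (s : Finset (ℕ × ℕ)) : Finset (ℕ × ℕ) :=
  s.image fun a => (a.1 - c, a.2 - c)

lemma mem_upArcs {c : ℕ} {s : Finset (ℕ × ℕ)} {p : ℕ × ℕ} :
    p ∈ upArcs c s ↔ ∃ a ∈ s, a.1 + c = p.1 ∧ a.2 + c = p.2 := by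
  simp [upArcs, Prod.ext_iff]

lemma mem_upArcs_succ {c : ℕ} {s : Finset (ℕ × ℕ)} {x y : ℕ}
    (hs : ∀ a ∈ s, 1 ≤ a.1 ∧ a.1 < a.2) :
    (x + c, y + c) ∈ upArcs c s ↔ (x, y) ∈ s := by
  rw [mem_upArcs]
  constructor
  · rintro ⟨a, ha, h1, h2⟩
    have : a = (x, y) := by
      have := hs a ha
      ext <;> simp <;> omega
    rwa [this] at ha
  · intro h; exact ⟨(x, y), h, rfl, rfl⟩

lemma mem_downArcs {c : ℕ} {s : Finset (ℕ × ℕ)} {x y : ℕ}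
    (hs : ∀ a ∈ s, c < a.1 ∧ a.1 < a.2) :
    (x, y) ∈ downArcs c s ↔ (x + c, y + c) ∈ s := by
  simp only [downArcs, Finset.mem_image]
  constructor
  · rintro ⟨a, ha, h⟩
    have h' := hs a ha
    rw [Prod.ext_iff] at h
    simp only at h
    have hx : a.1 = x + c := by omega
    have hy : a.2 = y + c := by omega
    rw [← hx, ← hy]
    simpa using ha
  · intro h
    refine ⟨(x + c, y + c), h, ?_⟩
    simp

/-- The counting sequences. -/
def Gc (n : ℕ) : ℕ := Nat.card {D : Diagram n // D.Modular 2 ∧ (1, n) ∈ D.arcs}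

def NFc (n : ℕ) : ℕ := Nat.card {D : Diagram n // D.Modular 2 ∧ (1, n) ∉ D.arcs}

/-- Almost-modular: like modular with a full arc `(1,n)`, but the stack at the
full arc may have size 1. -/
def KP (n : ℕ) (D : Diagram n) : Prop :=
  (1, n) ∈ D.arcs ∧ D.NC2 ∧ Diagram.MinArcLength 4 D ∧
    ∀ a ∈ D.arcs, a ≠ (1, n) → (a.1 - 1, a.2 + 1) ∉ D.arcs →
      (a.1 + 1, a.2 - 1) ∈ D.arcs

def Kc (n : ℕ) : ℕ := Nat.card {D : Diagram n // KP n D}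

lemma card_sigma_fin {k : ℕ} (f : Fin k → Type*) [∀ i, Finite (f i)] :
    Nat.card (Σ i, f i) = ∑ i, Nat.card (f i) := by
  letI := fun i => Fintype.ofFinite (f i)
  simp [Nat.card_eq_fintype_card, Fintype.card_sigma]

/-- The empty diagram. -/
def emptyDiagram (n : ℕ) : Diagram n :=
  ⟨∅, by simp, by simp⟩

lemma emptyDiagram_modular (n : ℕ) : (emptyDiagram n).Modular 2 := by
  rw [Diagram.modular_two_iff]
  refine ⟨?_, ?_, ?_⟩ <;> intro a ha <;> simp [emptyDiagram] at ha

lemma arcs_eq_empty_of_small {n : ℕ} (hn : n ≤ 2) (D : Diagram n)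
    (hD : Diagram.MinArcLength 4 D) : D.arcs = ∅ := by
  by_contra h
  obtain ⟨a, ha⟩ := Finset.nonempty_iff_ne_empty.mpr h
  have h1 := D.valid a ha
  have h2 := hD a ha
  omega

lemma Qcount_small {n : ℕ} (hn : n ≤ 2) : Qcount 2 n = 1 := by
  rw [Qcount, Nat.card_eq_one_iff_unique]
  constructor
  · constructor
    rintro ⟨D, hD⟩ ⟨E, hE⟩
    have hD' := arcs_eq_empty_of_small hn D hD.2.2
    have hE' := arcs_eq_empty_of_small hn E hE.2.2
    exact Subtype.ext (Diagram.ext' (hD'.trans hE'.symm))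
  · exact ⟨⟨emptyDiagram n, emptyDiagram_modular n⟩⟩

lemma NFc_small {n : ℕ} (hn : n ≤ 2) : NFc n = 1 := by
  rw [NFc, Nat.card_eq_one_iff_unique]
  constructor
  · constructor
    rintro ⟨D, hD⟩ ⟨E, hE⟩
    have hD' := arcs_eq_empty_of_small hn D hD.1.2.2
    have hE' := arcs_eq_empty_of_small hn E hE.1.2.2
    exact Subtype.ext (Diagram.ext' (hD'.trans hE'.symm))
  · exact ⟨⟨emptyDiagram n, emptyDiagram_modular n, by simp [emptyDiagram]⟩⟩

lemma Kc_small {n : ℕ} (hn : n ≤ 4) : Kc n = 0 := by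
  rw [Kc, Nat.card_eq_zero]
  left
  constructor
  rintro ⟨D, h1, _, h3, _⟩
  have hv := D.valid _ h1
  have hl := h3 _ h1
  simp only at hv hl
  omega

lemma Gc_small {n : ℕ} (hn : n ≤ 6) : Gc n = 0 := by
  rw [Gc, Nat.card_eq_zero]
  left
  constructor
  rintro ⟨D, hmod, h1⟩
  rw [Diagram.modular_two_iff] at hmod
  obtain ⟨hnc, hloc, hmal⟩ := hmod
  have hv := D.valid _ h1
  have hlen := hmal _ h1
  simp only at hv hlen
  have h2 : (1 + 1, n - 1) ∈ D.arcs := by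
    refine hloc _ h1 ?_
    intro hmem
    have hvv := D.valid _ hmem
    simp only at hvv
    omega
  have hl2 := hmal _ h2
  have hv2 := D.valid _ h2
  simp only at hl2 hv2
  omega

end AuxDev2
noncomputable section AuxDev3

open Diagram

variable {m : ℕ}

lemma side_arc_facts {D : Diagram (m + 2)} (htop : (1, m + 2) ∈ D.arcs)
    {a : ℕ × ℕ} (ha : a ∈ D.arcs) (hne : a ≠ (1, m + 2)) :
    2 ≤ a.1 ∧ a.2 ≤ m + 1 := by
  have hd := D.disj a ha (1, m + 2) htop hne
  have hv := D.valid a ha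
  simp only at hd hv
  omega

def peelArcs (m : ℕ) (D : Diagram (m + 2)) : Finset (ℕ × ℕ) :=
  downArcs 1 (D.arcs.erase (1, m + 2))

lemma mem_peelArcs {D : Diagram (m + 2)} (htop : (1, m + 2) ∈ D.arcs) {x y : ℕ} :
    (x, y) ∈ peelArcs m D ↔ ((x + 1, y + 1) ∈ D.arcs ∧ (x + 1, y + 1) ≠ (1, m + 2)) := by
  rw [peelArcs, mem_downArcs]
  · rw [Finset.mem_erase]
    tauto
  · intro a ha
    rw [Finset.mem_erase] at ha
    have h1 := side_arc_facts htop ha.2 ha.1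
    have h2 := D.valid a ha.2
    omega

def peelD (m : ℕ) (D : Diagram (m + 2)) (htop : (1, m + 2) ∈ D.arcs) : Diagram m where
  arcs := peelArcs m D
  valid := by
    rintro ⟨x, y⟩ h
    rw [mem_peelArcs htop] at h
    have h1 := side_arc_facts htop h.1 h.2
    have h2 := D.valid _ h.1
    simp only at h1 h2 ⊢
    omega
  disj := by
    rintro ⟨x, y⟩ hx ⟨x', y'⟩ hy hne
    rw [mem_peelArcs htop] at hx hy
    have := D.disj _ hx.1 _ hy.1 (by
      simp only [ne_eq, Prod.mk.injEq] at hne ⊢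
      omega)
    simp only [ne_eq, Prod.mk.injEq] at this ⊢
    omega

lemma mem_peelD {D : Diagram (m + 2)} (htop : (1, m + 2) ∈ D.arcs) {x y : ℕ} :
    (x, y) ∈ (peelD m D htop).arcs ↔
      ((x + 1, y + 1) ∈ D.arcs ∧ (x + 1, y + 1) ≠ (1, m + 2)) :=
  mem_peelArcs htop

lemma peel_top_mem {D : Diagram (m + 2)} (htop : (1, m + 2) ∈ D.arcs)
    (h2 : (2, m + 1) ∈ D.arcs) : (1, m) ∈ (peelD m D htop).arcs := by
  rw [mem_peelD htop]
  exact ⟨h2, by simp⟩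

lemma peel_nc2 {D : Diagram (m + 2)} (htop : (1, m + 2) ∈ D.arcs)
    (h : D.NC2) : (peelD m D htop).NC2 := by
  rintro ⟨x, y⟩ hx ⟨x', y'⟩ hy hc
  rw [mem_peelD htop] at hx hy
  exact h _ hx.1 _ hy.1 (by simp only at hc ⊢; omega)

lemma peel_mal {D : Diagram (m + 2)} (htop : (1, m + 2) ∈ D.arcs)
    (h : MinArcLength 4 D) : MinArcLength 4 (peelD m D htop) := by
  rintro ⟨x, y⟩ hx
  rw [mem_peelD htop] at hx
  have := h _ hx.1
  simp only at this ⊢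
  omega

lemma peel_klocal {D : Diagram (m + 2)} (htop : (1, m + 2) ∈ D.arcs)
    (hK : ∀ a ∈ D.arcs, a ≠ (1, m + 2) → (a.1 - 1, a.2 + 1) ∉ D.arcs →
      (a.1 + 1, a.2 - 1) ∈ D.arcs) :
    ∀ a ∈ (peelD m D htop).arcs, a ≠ (1, m) →
      (a.1 - 1, a.2 + 1) ∉ (peelD m D htop).arcs →
      (a.1 + 1, a.2 - 1) ∈ (peelD m D htop).arcs := by
  rintro ⟨x, y⟩ hx hne hnot
  rw [mem_peelD htop] at hx
  have hfacts := side_arc_facts htop hx.1 hx.2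
  have hv := D.valid _ hx.1
  simp only at hfacts hv hne hnot ⊢
  -- apply hK at (x+1, y+1)
  have hstep := hK _ hx.1 hx.2
  simp only at hstep
  have hyp : (x + 1 - 1, y + 1 + 1) ∉ D.arcs := by
    intro hmem
    have hx1 : (1 : ℕ) ≤ x := by omega
    by_cases he : (x, y + 2) = (1, m + 2)
    · -- then x = 1, y = m, so a = (1, m), contradiction
      exact hne (by simp only [Prod.mk.injEq] at he ⊢; omega)
    · apply hnot
      rw [mem_peelD htop]
      have hx' : x - 1 + 1 = x := by omega
      have hy' : y + 1 + 1 = y + 2 := by omega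
      rw [hx', hy']
      have : (x + 1 - 1) = x := by omega
      rw [this] at hmem
      exact ⟨hmem, he⟩
  have hconc := hstep hyp
  rw [mem_peelD htop]
  have h1 : x + 1 + 1 = (x + 1) + 1 := rfl
  have h2 : y - 1 + 1 = y + 1 - 1 := by omega
  rw [h2]
  refine ⟨hconc, ?_⟩
  simp only [ne_eq, Prod.mk.injEq]
  omega

def pasteArcs (m : ℕ) (s : Finset (ℕ × ℕ)) : Finset (ℕ × ℕ) :=
  insert (1, m + 2) (upArcs 1 s)

lemma mem_pasteArcs {s : Finset (ℕ × ℕ)} (hs : ∀ a ∈ s, 1 ≤ a.1 ∧ a.1 < a.2)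
    {x y : ℕ} :
    (x, y) ∈ pasteArcs m s ↔
      ((x, y) = (1, m + 2) ∨ (2 ≤ x ∧ 2 ≤ y ∧ (x - 1, y - 1) ∈ s)) := by
  rw [pasteArcs, Finset.mem_insert, mem_upArcs]
  constructor
  · rintro (h | ⟨a, ha, h1, h2⟩)
    · exact Or.inl h
    · right
      have := hs a ha
      refine ⟨by omega, by omega, ?_⟩
      have hx : x - 1 = a.1 := by omega
      have hy : y - 1 = a.2 := by omega
      rw [hx, hy]
      simpa using ha
  · rintro (h | ⟨hx, hy, hmem⟩)
    · exact Or.inl h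
    · right
      exact ⟨(x - 1, y - 1), hmem, by simp; omega, by simp; omega⟩

def pasteD (m : ℕ) (D' : Diagram m) : Diagram (m + 2) where
  arcs := pasteArcs m D'.arcs
  valid := by
    rintro ⟨x, y⟩ h
    rw [mem_pasteArcs (fun a ha => ⟨(D'.valid a ha).1, (D'.valid a ha).2.1⟩)] at h
    rcases h with h | ⟨hx, hy, hmem⟩
    · simp only [Prod.mk.injEq] at h
      simp only
      omega
    · have := D'.valid _ hmem
      simp only at this ⊢
      omega
  disj := by
    have hv : ∀ a ∈ D'.arcs, 1 ≤ a.1 ∧ a.1 < a.2 :=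
      fun a ha => ⟨(D'.valid a ha).1, (D'.valid a ha).2.1⟩
    rintro ⟨x, y⟩ hx ⟨x', y'⟩ hy hne
    rw [mem_pasteArcs hv] at hx hy
    simp only [ne_eq, Prod.mk.injEq] at hne ⊢
    rcases hx with hx | ⟨hx1, hx2, hx3⟩ <;> rcases hy with hy | ⟨hy1, hy2, hy3⟩
    · simp only [Prod.mk.injEq] at hx hy; omega
    · simp only [Prod.mk.injEq] at hx
      have h1 := D'.valid _ hy3
      have h2 := D'.valid _ hy3
      simp only at h1
      omega
    · simp only [Prod.mk.injEq] at hy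
      have h1 := D'.valid _ hx3
      simp only at h1
      omega
    · have := D'.disj _ hx3 _ hy3 (by
        simp only [ne_eq, Prod.mk.injEq]
        omega)
      have h1 := D'.valid _ hx3
      have h2 := D'.valid _ hy3
      simp only [ne_eq, Prod.mk.injEq] at this
      simp only at h1 h2
      omega

lemma mem_pasteD {D' : Diagram m} {x y : ℕ} :
    (x, y) ∈ (pasteD m D').arcs ↔
      ((x, y) = (1, m + 2) ∨ (2 ≤ x ∧ 2 ≤ y ∧ (x - 1, y - 1) ∈ D'.arcs)) :=
  mem_pasteArcs (fun a ha => ⟨(D'.valid a ha).1, (D'.valid a ha).2.1⟩)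

lemma mem_pasteD_succ {D' : Diagram m} {x y : ℕ} (hx : 1 ≤ x) :
    (x + 1, y + 1) ∈ (pasteD m D').arcs ↔ (x, y) ∈ D'.arcs := by
  rw [mem_pasteD]
  constructor
  · rintro (h | ⟨h1, h2, h3⟩)
    · simp only [Prod.mk.injEq] at h; omega
    · simpa using h3
  · intro h
    right
    have := D'.valid _ h
    simp only at this
    refine ⟨by omega, by omega, by simpa using h⟩

lemma pasteD_top {D' : Diagram m} : (1, m + 2) ∈ (pasteD m D').arcs := by
  rw [mem_pasteD]; left; rfl

lemma paste_nc2 {D' : Diagram m} (h : D'.NC2) : (pasteD m D').NC2 := by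
  rintro ⟨x, y⟩ hx ⟨x', y'⟩ hy hc
  rw [mem_pasteD] at hx hy
  simp only at hc
  rcases hx with hx | ⟨hx1, hx2, hx3⟩ <;> rcases hy with hy | ⟨hy1, hy2, hy3⟩
  · simp only [Prod.mk.injEq] at hx hy; omega
  · simp only [Prod.mk.injEq] at hx
    have := D'.valid _ hy3
    simp only at this
    omega
  · simp only [Prod.mk.injEq] at hy
    have := D'.valid _ hx3
    simp only at this
    omega
  · exact h _ hx3 _ hy3 (by simp only; omega)

lemma paste_mal {D' : Diagram m} (hm : 3 ≤ m) (h : MinArcLength 4 D') :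
    MinArcLength 4 (pasteD m D') := by
  rintro ⟨x, y⟩ hx
  rw [mem_pasteD] at hx
  rcases hx with hx | ⟨hx1, hx2, hx3⟩
  · simp only [Prod.mk.injEq] at hx
    simp only
    omega
  · have := h _ hx3
    simp only at this ⊢
    omega

lemma paste_klocal {D' : Diagram m}
    (hK : ∀ a ∈ D'.arcs, a ≠ (1, m) → (a.1 - 1, a.2 + 1) ∉ D'.arcs →
      (a.1 + 1, a.2 - 1) ∈ D'.arcs) :
    ∀ a ∈ (pasteD m D').arcs, a ≠ (1, m + 2) →
      (a.1 - 1, a.2 + 1) ∉ (pasteD m D').arcs →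
      (a.1 + 1, a.2 - 1) ∈ (pasteD m D').arcs := by
  rintro ⟨x, y⟩ hx hne hnot
  rw [mem_pasteD] at hx
  rcases hx with hx | ⟨hx1, hx2, hx3⟩
  · exact absurd hx hne
  · have hv := D'.valid _ hx3
    simp only at hv hne hnot ⊢
    by_cases hcase : (x - 1, y - 1) = (1, m)
    · -- a = (2, m+1), then (1, m+2) ∈ arcs contradicts hnot
      exfalso
      apply hnot
      simp only [Prod.mk.injEq] at hcase
      have hx' : x - 1 = 1 := hcase.1
      have hy' : y - 1 = m := hcase.2
      have : (x - 1, y + 1) = (1, m + 2) := by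
        simp only [Prod.mk.injEq]
        omega
      rw [this]
      exact pasteD_top
    · have hstep := hK _ hx3 hcase
      simp only at hstep
      have hyp : (x - 1 - 1, y - 1 + 1) ∉ D'.arcs := by
        intro hmem
        apply hnot
        rw [mem_pasteD]
        right
        have h1 := D'.valid _ hmem
        simp only at h1
        refine ⟨by omega, by omega, ?_⟩
        have e1 : x - 1 - 1 = x - 1 - 1 := rfl
        have e2 : y + 1 - 1 = y - 1 + 1 := by omega
        rw [e2]
        exact hmem
      have hconc := hstep hyp
      rw [mem_pasteD]
      right
      have h1 := D'.valid _ hconc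
      simp only at h1
      refine ⟨by omega, by omega, ?_⟩
      have e1 : x + 1 - 1 = x - 1 + 1 := by omega
      rw [e1]
      exact hconc

lemma paste_peel {D : Diagram (m + 2)} (htop : (1, m + 2) ∈ D.arcs) :
    pasteD m (peelD m D htop) = D := by
  apply Diagram.ext'
  ext ⟨x, y⟩
  rw [mem_pasteD]
  constructor
  · rintro (h | ⟨hx, hy, hmem⟩)
    · rw [h]; exact htop
    · rw [mem_peelD htop] at hmem
      have e1 : x - 1 + 1 = x := by omega
      have e2 : y - 1 + 1 = y := by omega
      rw [e1, e2] at hmem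
      exact hmem.1
  · intro h
    by_cases he : (x, y) = (1, m + 2)
    · exact Or.inl he
    · right
      have hf := side_arc_facts htop h he
      have hv := D.valid _ h
      simp only at hf hv
      refine ⟨by omega, by omega, ?_⟩
      rw [mem_peelD htop]
      have e1 : x - 1 + 1 = x := by omega
      have e2 : y - 1 + 1 = y := by omega
      rw [e1, e2]
      exact ⟨h, he⟩

lemma peel_paste (D' : Diagram m) :
    peelD m (pasteD m D') pasteD_top = D' := by
  apply Diagram.ext'
  ext ⟨x, y⟩
  rw [mem_peelD pasteD_top]
  constructor
  · rintro ⟨hmem, hne⟩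
    rw [mem_pasteD] at hmem
    rcases hmem with h | ⟨hx, hy, h3⟩
    · exact absurd h hne
    · simpa using h3
  · intro h
    have hv := D'.valid _ h
    simp only at hv
    constructor
    · rw [mem_pasteD]
      right
      refine ⟨by omega, by omega, by simpa using h⟩
    · simp only [ne_eq, Prod.mk.injEq]
      omega

lemma paste_two_mem {D' : Diagram m} :
    (2, m + 1) ∈ (pasteD m D').arcs ↔ (1, m) ∈ D'.arcs := by
  have := mem_pasteD_succ (D' := D') (x := 1) (y := m) (by omega)
  simpa using this

end AuxDev3
noncomputable section AuxDev4

open Diagram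

variable {m : ℕ}

lemma top_step {D : Diagram (m + 2)} (htop : (1, m + 2) ∈ D.arcs)
    (hloc : D.Local2) : (2, m + 1) ∈ D.arcs := by
  have := hloc _ htop (by
    intro hmem
    have := D.valid _ hmem
    simp only at this
    omega)
  simpa using this

lemma KP_of_modular_top {D : Diagram (m + 2)} (h : D.Modular 2)
    (htop : (1, m + 2) ∈ D.arcs) : KP m (peelD m D htop) := by
  rw [Diagram.modular_two_iff] at h
  obtain ⟨hnc, hloc, hmal⟩ := h
  exact ⟨peel_top_mem htop (top_step htop hloc),
    peel_nc2 htop hnc, peel_mal htop hmal,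
    peel_klocal htop (fun a ha _ => hloc a ha)⟩

lemma modular_paste_of_KP {D' : Diagram m} (h : KP m D') :
    (pasteD m D').Modular 2 := by
  obtain ⟨h1m, hnc, hmal, hkl⟩ := h
  have hm : 3 ≤ m := by
    have := hmal _ h1m
    simp only at this
    omega
  rw [Diagram.modular_two_iff]
  refine ⟨paste_nc2 hnc, ?_, paste_mal hm hmal⟩
  intro a ha hnot
  by_cases he : a = (1, m + 2)
  · subst he
    simp only
    have e : ((1 : ℕ) + 1, m + 2 - 1) = (2, m + 1) := by simp
    rw [e, paste_two_mem]
    exact h1m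
  · exact paste_klocal hkl a ha he hnot

lemma KP_paste_of_KP {D' : Diagram m} (hm : 3 ≤ m) (h : KP m D') :
    KP (m + 2) (pasteD m D') :=
  ⟨pasteD_top, paste_nc2 h.2.1, paste_mal hm h.2.2.1, paste_klocal h.2.2.2⟩

lemma KP_paste_of_modular {D' : Diagram m} (hm : 3 ≤ m) (h : D'.Modular 2) :
    KP (m + 2) (pasteD m D') := by
  rw [Diagram.modular_two_iff] at h
  exact ⟨pasteD_top, paste_nc2 h.1, paste_mal hm h.2.2,
    paste_klocal (fun a ha _ => h.2.1 a ha)⟩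

lemma KP_peel_of_KP {D : Diagram (m + 2)} (h : KP (m + 2) D)
    (h2 : (2, m + 1) ∈ D.arcs) : KP m (peelD m D h.1) :=
  ⟨peel_top_mem h.1 h2, peel_nc2 h.1 h.2.1, peel_mal h.1 h.2.2.1,
    peel_klocal h.1 h.2.2.2⟩

lemma modular_peel_of_KP {D : Diagram (m + 2)} (h : KP (m + 2) D)
    (h2 : (2, m + 1) ∉ D.arcs) :
    (peelD m D h.1).Modular 2 ∧ (1, m) ∉ (peelD m D h.1).arcs := by
  have htop := h.1
  constructor
  · rw [Diagram.modular_two_iff]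
    refine ⟨peel_nc2 htop h.2.1, ?_, peel_mal htop h.2.2.1⟩
    intro a ha hnot
    have hne : a ≠ (1, m) := by
      intro he
      subst he
      rw [mem_peelD htop] at ha
      exact h2 ha.1
    exact peel_klocal htop h.2.2.2 a ha hne hnot
  · intro hmem
    rw [mem_peelD htop] at hmem
    exact h2 hmem.1

/-- The bijection giving `Gc (m+2) = Kc m`. -/
def equivGK (m : ℕ) :
    {D : Diagram (m + 2) // D.Modular 2 ∧ (1, m + 2) ∈ D.arcs} ≃
      {D' : Diagram m // KP m D'} where
  toFun := fun D => ⟨peelD m D.1 D.2.2, KP_of_modular_top D.2.1 D.2.2⟩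
  invFun := fun D' => ⟨pasteD m D'.1, modular_paste_of_KP D'.2, pasteD_top⟩
  left_inv := fun D => Subtype.ext (paste_peel D.2.2)
  right_inv := fun D' => Subtype.ext (peel_paste D'.1)

lemma Gc_rec (m : ℕ) : Gc (m + 2) = Kc m := by
  rw [Gc, Kc]
  exact Nat.card_congr (equivGK m)

/-- The bijection giving `Kc (m+2) = Kc m + NFc m` for `m ≥ 3`. -/
def equivK (m : ℕ) (hm : 3 ≤ m) :
    {D : Diagram (m + 2) // KP (m + 2) D} ≃
      ({D' : Diagram m // KP m D'} ⊕
        {D' : Diagram m // D'.Modular 2 ∧ (1, m) ∉ D'.arcs}) where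
  toFun := fun D =>
    if h2 : (2, m + 1) ∈ D.1.arcs then
      Sum.inl ⟨peelD m D.1 D.2.1, KP_peel_of_KP D.2 h2⟩
    else
      Sum.inr ⟨peelD m D.1 D.2.1, modular_peel_of_KP D.2 h2⟩
  invFun := fun s =>
    Sum.elim (fun D' => ⟨pasteD m D'.1, KP_paste_of_KP hm D'.2⟩)
      (fun D' => ⟨pasteD m D'.1, KP_paste_of_modular hm D'.2.1⟩) s
  left_inv := by
    rintro ⟨D, hKP⟩
    dsimp only
    by_cases h2 : (2, m + 1) ∈ D.arcs
    · rw [dif_pos h2]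
      exact Subtype.ext (paste_peel hKP.1)
    · rw [dif_neg h2]
      exact Subtype.ext (paste_peel hKP.1)
  right_inv := by
    rintro (⟨D', hD'⟩ | ⟨D', hD'⟩)
    · have h2 : (2, m + 1) ∈ (pasteD m D').arcs := paste_two_mem.mpr hD'.1
      dsimp only [Sum.elim_inl]
      rw [dif_pos h2]
      exact congrArg Sum.inl (Subtype.ext (peel_paste D'))
    · have h2 : (2, m + 1) ∉ (pasteD m D').arcs := fun h => hD'.2 (paste_two_mem.mp h)
      dsimp only [Sum.elim_inr]
      rw [dif_neg h2]
      exact congrArg Sum.inr (Subtype.ext (peel_paste D'))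

lemma Kc_rec (m : ℕ) (hm : 3 ≤ m) : Kc (m + 2) = Kc m + NFc m := by
  rw [Kc, Nat.card_congr (equivK m hm), Nat.card_sum]
  rfl

def splitEquiv (n : ℕ) :
    {D : Diagram n // D.Modular 2} ≃
      ({D : Diagram n // D.Modular 2 ∧ (1, n) ∉ D.arcs} ⊕
        {D : Diagram n // D.Modular 2 ∧ (1, n) ∈ D.arcs}) where
  toFun := fun D =>
    if h : (1, n) ∈ D.1.arcs then Sum.inr ⟨D.1, D.2, h⟩ else Sum.inl ⟨D.1, D.2, h⟩
  invFun := fun s => Sum.elim (fun E => ⟨E.1, E.2.1⟩) (fun E => ⟨E.1, E.2.1⟩) s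
  left_inv := by
    rintro ⟨D, hD⟩
    dsimp only
    by_cases h : (1, n) ∈ D.arcs
    · rw [dif_pos h]
      rfl
    · rw [dif_neg h]
      rfl
  right_inv := by
    rintro (⟨D, hD⟩ | ⟨D, hD⟩)
    · dsimp only [Sum.elim_inl]
      rw [dif_neg hD.2]
    · dsimp only [Sum.elim_inr]
      rw [dif_pos hD.2]

lemma Qcount_split (n : ℕ) : Qcount 2 n = NFc n + Gc n := by
  rw [Qcount, NFc, Gc, Nat.card_congr (splitEquiv n), Nat.card_sum]

end AuxDev4
noncomputable section AuxDev5

open Diagram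

/-- Generic congruence: modularity only depends on the arc set. -/
lemma modular_congr {n m : ℕ} {D : Diagram n} {E : Diagram m}
    (h : D.arcs = E.arcs) : D.Modular 2 ↔ E.Modular 2 := by
  unfold Diagram.Modular Diagram.Noncrossing Diagram.HasCrossing Diagram.MinStack
    Diagram.IsStack Diagram.MinArcLength
  rw [h]

variable {N : ℕ}

lemma mem_upArcs' {c : ℕ} {s : Finset (ℕ × ℕ)} {x y : ℕ}
    (hs : ∀ a ∈ s, 1 ≤ a.1 ∧ a.1 < a.2) :
    (x, y) ∈ upArcs c s ↔ (c < x ∧ c < y ∧ (x - c, y - c) ∈ s) := by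
  rw [mem_upArcs]
  constructor
  · rintro ⟨a, ha, h1, h2⟩
    have := hs a ha
    refine ⟨by omega, by omega, ?_⟩
    have hx : x - c = a.1 := by omega
    have hy : y - c = a.2 := by omega
    rw [hx, hy]
    simpa using ha
  · rintro ⟨hx, hy, hmem⟩
    exact ⟨(x - c, y - c), hmem, by simp; omega, by simp; omega⟩

/-- Left part of a diagram cut at `c`. -/
def leftPart (c : ℕ) (D : Diagram N) : Diagram c where
  arcs := D.arcs.filter fun a => a.2 ≤ c
  valid := by
    rintro a ha
    rw [Finset.mem_filter] at ha
    have := D.valid a ha.1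
    exact ⟨this.1, this.2.1, ha.2⟩
  disj := by
    intro a ha b hb hne
    rw [Finset.mem_filter] at ha hb
    exact D.disj a ha.1 b hb.1 hne

lemma mem_leftPart {c : ℕ} {D : Diagram N} {x y : ℕ} :
    (x, y) ∈ (leftPart c D).arcs ↔ ((x, y) ∈ D.arcs ∧ y ≤ c) := by
  simp [leftPart]

/-- Right part of a diagram cut at `c`, shifted down to `[1, j]`. -/
def rightPart (c j : ℕ) (D : Diagram N) (hcut : ∀ a ∈ D.arcs, a.2 ≤ c + j) :
    Diagram j where
  arcs := downArcs c (D.arcs.filter fun a => c < a.1)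
  valid := by
    rintro ⟨x, y⟩ h
    rw [mem_downArcs (fun a ha => by
      rw [Finset.mem_filter] at ha
      exact ⟨ha.2, (D.valid a ha.1).2.1⟩)] at h
    rw [Finset.mem_filter] at h
    have hv := D.valid _ h.1
    have hc := hcut _ h.1
    simp only at h hv hc ⊢
    omega
  disj := by
    have hmem : ∀ x y : ℕ, (x, y) ∈ downArcs c (D.arcs.filter fun a => c < a.1) ↔
        ((x + c, y + c) ∈ D.arcs ∧ c < x + c) := by
      intro x y
      rw [mem_downArcs (fun a ha => by
        rw [Finset.mem_filter] at ha
        exact ⟨ha.2, (D.valid a ha.1).2.1⟩), Finset.mem_filter]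
    rintro ⟨x, y⟩ hx ⟨x', y'⟩ hy hne
    rw [hmem] at hx hy
    have := D.disj _ hx.1 _ hy.1 (by
      simp only [ne_eq, Prod.mk.injEq] at hne ⊢
      omega)
    simp only [ne_eq, Prod.mk.injEq] at this ⊢
    omega

lemma mem_rightPart {c j : ℕ} {D : Diagram N} {hcut : ∀ a ∈ D.arcs, a.2 ≤ c + j}
    {x y : ℕ} :
    (x, y) ∈ (rightPart c j D hcut).arcs ↔ ((x + c, y + c) ∈ D.arcs ∧ 1 ≤ x) := by
  show (x, y) ∈ downArcs c (D.arcs.filter fun a => c < a.1) ↔ _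
  rw [mem_downArcs (fun a ha => by
    rw [Finset.mem_filter] at ha
    exact ⟨ha.2, (D.valid a ha.1).2.1⟩), Finset.mem_filter]
  constructor <;> rintro ⟨h1, h2⟩ <;> exact ⟨h1, by omega⟩

/-- Concatenation of two diagrams. -/
def joinD (c j : ℕ) (Dl : Diagram c) (E : Diagram j) (hN : c + j = N) : Diagram N where
  arcs := Dl.arcs ∪ upArcs c E.arcs
  valid := by
    have hvE : ∀ a ∈ E.arcs, 1 ≤ a.1 ∧ a.1 < a.2 :=
      fun a ha => ⟨(E.valid a ha).1, (E.valid a ha).2.1⟩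
    rintro ⟨x, y⟩ h
    rw [Finset.mem_union, mem_upArcs' hvE] at h
    rcases h with h | ⟨h1, h2, h3⟩
    · have := Dl.valid _ h
      simp only at this ⊢
      omega
    · have := E.valid _ h3
      simp only at this ⊢
      omega
  disj := by
    have hvE : ∀ a ∈ E.arcs, 1 ≤ a.1 ∧ a.1 < a.2 :=
      fun a ha => ⟨(E.valid a ha).1, (E.valid a ha).2.1⟩
    rintro ⟨x, y⟩ hx ⟨x', y'⟩ hy hne
    rw [Finset.mem_union, mem_upArcs' hvE] at hx hy
    simp only [ne_eq, Prod.mk.injEq] at hne ⊢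
    rcases hx with hx | ⟨hx1, hx2, hx3⟩ <;> rcases hy with hy | ⟨hy1, hy2, hy3⟩
    · have := Dl.disj _ hx _ hy (by simp only [ne_eq, Prod.mk.injEq]; omega)
      simpa using this
    · have h1 := Dl.valid _ hx
      simp only at h1
      omega
    · have h1 := Dl.valid _ hy
      simp only at h1
      omega
    · have := E.disj _ hx3 _ hy3 (by simp only [ne_eq, Prod.mk.injEq]; omega)
      have h1 := E.valid _ hx3
      have h2 := E.valid _ hy3
      simp only [ne_eq, Prod.mk.injEq] at this
      simp only at h1 h2
      omega

lemma mem_joinD {c j : ℕ} {Dl : Diagram c} {E : Diagram j} {hN : c + j = N}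
    {x y : ℕ} :
    (x, y) ∈ (joinD c j Dl E hN).arcs ↔
      ((x, y) ∈ Dl.arcs ∨ (c < x ∧ c < y ∧ (x - c, y - c) ∈ E.arcs)) := by
  show (x, y) ∈ Dl.arcs ∪ upArcs c E.arcs ↔ _
  rw [Finset.mem_union, mem_upArcs' (fun a ha => ⟨(E.valid a ha).1, (E.valid a ha).2.1⟩)]

/-- The covering property at a cut. -/
lemma cover_lemma {D : Diagram N} (hmod : D.NC2) {c : ℕ}
    (harc : (c + 1, N) ∈ D.arcs) :
    ∀ a ∈ D.arcs, a.2 ≤ c ∨ c + 1 ≤ a.1 := by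
  intro a ha
  by_contra hcon
  push_neg at hcon
  obtain ⟨h1, h2⟩ := hcon
  have hne : a ≠ (c + 1, N) := by
    intro he
    rw [he] at h2
    simp at h2
  have hd := D.disj a ha _ harc hne
  have hv := D.valid a ha
  have hv2 := D.valid _ harc
  simp only [ne_eq, Prod.mk.injEq] at hd
  simp only at hv hv2
  exact hmod a ha _ harc (by simp only; omega)

/-- Modularity of the left part. -/
lemma leftPart_modular {c : ℕ} {D : Diagram N} (hmod : D.Modular 2)
    (hcover : ∀ a ∈ D.arcs, a.2 ≤ c ∨ c + 1 ≤ a.1) :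
    (leftPart c D).Modular 2 := by
  rw [Diagram.modular_two_iff] at hmod ⊢
  obtain ⟨hnc, hloc, hmal⟩ := hmod
  refine ⟨?_, ?_, ?_⟩
  · rintro ⟨x, y⟩ hx ⟨x', y'⟩ hy hc
    rw [mem_leftPart] at hx hy
    exact hnc _ hx.1 _ hy.1 hc
  · rintro ⟨x, y⟩ hx hnot
    rw [mem_leftPart] at hx
    have hv := D.valid _ hx.1
    simp only at hv hnot ⊢
    have hyp : ((x, y).1 - 1, (x, y).2 + 1) ∉ D.arcs := by
      intro hmem
      rcases hcover _ hmem with h | h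
      · exact hnot (mem_leftPart.mpr ⟨hmem, h⟩)
      · simp only at h
        omega
    have := hloc _ hx.1 hyp
    simp only at this
    rw [mem_leftPart]
    exact ⟨this, by omega⟩
  · rintro ⟨x, y⟩ hx
    rw [mem_leftPart] at hx
    exact hmal _ hx.1

/-- Modularity of the right part. -/
lemma rightPart_modular {c j : ℕ} {D : Diagram N} (hmod : D.Modular 2)
    {hcut : ∀ a ∈ D.arcs, a.2 ≤ c + j}
    (hcover : ∀ a ∈ D.arcs, a.2 ≤ c ∨ c + 1 ≤ a.1) :
    (rightPart c j D hcut).Modular 2 := by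
  rw [Diagram.modular_two_iff] at hmod ⊢
  obtain ⟨hnc, hloc, hmal⟩ := hmod
  refine ⟨?_, ?_, ?_⟩
  · rintro ⟨x, y⟩ hx ⟨x', y'⟩ hy hc
    rw [mem_rightPart] at hx hy
    refine hnc _ hx.1 _ hy.1 (by simp only at hc ⊢; omega)
  · rintro ⟨x, y⟩ hx hnot
    rw [mem_rightPart] at hx
    have hv := D.valid _ hx.1
    simp only at hv hnot ⊢
    have hyp : (x + c - 1, y + c + 1) ∉ D.arcs := by
      intro hmem
      have hvm := D.valid _ hmem
      simp only at hvm
      rcases hcover _ hmem with h | h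
      · simp only at h
        omega
      · simp only at h
        apply hnot
        rw [mem_rightPart]
        have e1 : x - 1 + c = x + c - 1 := by omega
        have e2 : y + 1 + c = y + c + 1 := by omega
        rw [e1, e2]
        exact ⟨hmem, by omega⟩
    have hconc := hloc _ hx.1 hyp
    simp only at hconc
    rw [mem_rightPart]
    have e1 : x + 1 + c = x + c + 1 := by omega
    have e2 : y - 1 + c = y + c - 1 := by omega
    rw [e1, e2]
    exact ⟨hconc, by omega⟩
  · rintro ⟨x, y⟩ hx
    rw [mem_rightPart] at hx
    have := hmal _ hx.1
    simp only at this ⊢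
    omega

/-- Modularity of a concatenation. -/
lemma joinD_modular {c j : ℕ} {Dl : Diagram c} {E : Diagram j} {hN : c + j = N}
    (hl : Dl.Modular 2) (hr : E.Modular 2) :
    (joinD c j Dl E hN).Modular 2 := by
  rw [Diagram.modular_two_iff] at hl hr ⊢
  obtain ⟨hncl, hlocl, hmall⟩ := hl
  obtain ⟨hncr, hlocr, hmalr⟩ := hr
  refine ⟨?_, ?_, ?_⟩
  · rintro ⟨x, y⟩ hx ⟨x', y'⟩ hy hc
    rw [mem_joinD] at hx hy
    simp only at hc
    rcases hx with hx | ⟨hx1, hx2, hx3⟩ <;> rcases hy with hy | ⟨hy1, hy2, hy3⟩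
    · exact hncl _ hx _ hy (by simp only; omega)
    · have := Dl.valid _ hx
      simp only at this
      omega
    · have := Dl.valid _ hy
      simp only at this
      omega
    · exact hncr _ hx3 _ hy3 (by simp only; omega)
  · rintro ⟨x, y⟩ hx hnot
    rw [mem_joinD] at hx
    simp only at hnot ⊢
    rcases hx with hx | ⟨hx1, hx2, hx3⟩
    · have hv := Dl.valid _ hx
      simp only at hv
      have hyp : ((x, y).1 - 1, (x, y).2 + 1) ∉ Dl.arcs := by
        intro hmem
        exact hnot (mem_joinD.mpr (Or.inl hmem))
      have := hlocl _ hx hyp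
      simp only at this
      rw [mem_joinD]
      exact Or.inl this
    · have hv := E.valid _ hx3
      simp only at hv
      have hyp : ((x - c, y - c).1 - 1, (x - c, y - c).2 + 1) ∉ E.arcs := by
        intro hmem
        simp only at hmem
        have hvm := E.valid _ hmem
        simp only at hvm
        apply hnot
        rw [mem_joinD]
        right
        refine ⟨by omega, by omega, ?_⟩
        have e1 : x - 1 - c = x - c - 1 := by omega
        have e2 : y + 1 - c = y - c + 1 := by omega
        rw [e1, e2]
        exact hmem
      have hconc := hlocr _ hx3 hyp
      simp only at hconc
      rw [mem_joinD]
      right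
      have hvc := E.valid _ hconc
      simp only at hvc
      refine ⟨by omega, by omega, ?_⟩
      have e1 : x + 1 - c = x - c + 1 := by omega
      have e2 : y - 1 - c = y - c - 1 := by omega
      rw [e1, e2]
      exact hconc
  · rintro ⟨x, y⟩ hx
    rw [mem_joinD] at hx
    rcases hx with hx | ⟨hx1, hx2, hx3⟩
    · exact hmall _ hx
    · have := hmalr _ hx3
      simp only at this ⊢
      omega

end AuxDev5
noncomputable section AuxDev6

open Diagram

variable {n : ℕ}

/-- The size of the block containing the last vertex (`0` if the last vertex
is isolated). -/
def blockIdx (n : ℕ) (D : Diagram (n + 1)) : Fin (n + 2) :=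
  if h : ∃ a ∈ D.arcs, a.2 = n + 1 then
    ⟨n + 2 - h.choose.1, by
      have h1 := h.choose_spec.1
      have := D.valid _ h1
      omega⟩
  else 0

lemma lastArc_unique {D : Diagram (n + 1)} {a b : ℕ × ℕ} (ha : a ∈ D.arcs)
    (ha2 : a.2 = n + 1) (hb : b ∈ D.arcs) (hb2 : b.2 = n + 1) : a = b := by
  by_contra hne
  have := D.disj a ha b hb hne
  omega

lemma blockIdx_eq {D : Diagram (n + 1)} {a : ℕ × ℕ} (ha : a ∈ D.arcs)
    (ha2 : a.2 = n + 1) :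
    (blockIdx n D : ℕ) = n + 2 - a.1 := by
  rw [blockIdx, dif_pos ⟨a, ha, ha2⟩]
  have hspec := (Exists.intro a ⟨ha, ha2⟩ : ∃ a ∈ D.arcs, a.2 = n + 1).choose_spec
  have heq := lastArc_unique hspec.1 hspec.2 ha ha2
  simp only [Fin.val_mk]
  rw [heq]

lemma blockIdx_eq_zero {D : Diagram (n + 1)} (h : ∀ a ∈ D.arcs, a.2 ≠ n + 1) :
    blockIdx n D = 0 := by
  rw [blockIdx, dif_neg]
  rintro ⟨a, ha, ha2⟩
  exact h a ha ha2

lemma no_last_of_blockIdx_zero {D : Diagram (n + 1)} (h : blockIdx n D = 0) :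
    ∀ a ∈ D.arcs, a.2 ≠ n + 1 := by
  intro a ha ha2
  have := blockIdx_eq ha ha2
  rw [h] at this
  have hv := D.valid a ha
  simp only [Fin.val_zero] at this
  omega

/-- Restriction / relaxation of the bound. -/
def restrictD (D : Diagram (n + 1)) (h : ∀ a ∈ D.arcs, a.2 ≤ n) : Diagram n where
  arcs := D.arcs
  valid := fun a ha => ⟨(D.valid a ha).1, (D.valid a ha).2.1, h a ha⟩
  disj := D.disj

def relaxD (D : Diagram n) : Diagram (n + 1) where
  arcs := D.arcs
  valid := fun a ha => ⟨(D.valid a ha).1, (D.valid a ha).2.1, by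
    have := (D.valid a ha).2.2; omega⟩
  disj := D.disj

/-- The fiber at `0` is the set of diagrams whose last vertex is isolated. -/
def fiberZeroEquiv (n : ℕ) :
    {D : Diagram (n + 1) // D.Modular 2 ∧ blockIdx n D = 0} ≃
      {D : Diagram n // D.Modular 2} where
  toFun := fun D => ⟨restrictD D.1 (by
      intro a ha
      have := D.1.valid a ha
      have := no_last_of_blockIdx_zero D.2.2 a ha
      omega),
    (modular_congr (by rfl)).mp D.2.1⟩
  invFun := fun D => ⟨relaxD D.1, (modular_congr (by rfl)).mp D.2, by
    apply blockIdx_eq_zero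
    intro a ha
    have := D.1.valid a ha
    show a.2 ≠ n + 1
    omega⟩
  left_inv := fun D => Subtype.ext (Diagram.ext' rfl)
  right_inv := fun D => Subtype.ext (Diagram.ext' rfl)

lemma fiber_harc {j : Fin (n + 2)} (hj : 1 ≤ (j : ℕ)) {D : Diagram (n + 1)}
    (hD : D.Modular 2 ∧ blockIdx n D = j) :
    (n + 1 - (j : ℕ) + 1, n + 1) ∈ D.arcs := by
  have hjle : (j : ℕ) ≤ n + 1 := by have := j.isLt; omega
  have hex : ∃ a ∈ D.arcs, a.2 = n + 1 := by
    by_contra hcon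
    push_neg at hcon
    have h0 := blockIdx_eq_zero hcon
    rw [hD.2] at h0
    have : (j : ℕ) = 0 := by rw [h0]; rfl
    omega
  obtain ⟨a, ha, ha2⟩ := hex
  have hbi := blockIdx_eq ha ha2
  rw [hD.2] at hbi
  have hv := D.valid a ha
  have : a = (n + 1 - (j : ℕ) + 1, n + 1) := by
    ext
    · simp only; omega
    · exact ha2
  rwa [this] at ha

lemma fiber_hcut {j : ℕ} (hj : j ≤ n + 1) (D : Diagram (n + 1)) :
    ∀ a ∈ D.arcs, a.2 ≤ (n + 1 - j) + j := by
  intro a ha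
  have := D.valid a ha
  omega

lemma mem_right_top {j : Fin (n + 2)} (hj : 1 ≤ (j : ℕ)) {D : Diagram (n + 1)}
    (hD : D.Modular 2 ∧ blockIdx n D = j) :
    (1, (j : ℕ)) ∈ (rightPart (n + 1 - (j : ℕ)) (j : ℕ) D
      (fiber_hcut (by have := j.isLt; omega) D)).arcs := by
  rw [mem_rightPart]
  have hjle : (j : ℕ) ≤ n + 1 := by have := j.isLt; omega
  refine ⟨?_, le_refl 1⟩
  have e : (1 + (n + 1 - (j : ℕ)), (j : ℕ) + (n + 1 - (j : ℕ))) =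
      (n + 1 - (j : ℕ) + 1, n + 1) := by
    simp only [Prod.mk.injEq]
    omega
  rw [e]
  exact fiber_harc hj hD

lemma blockIdx_join {j : Fin (n + 2)} (hj : 1 ≤ (j : ℕ))
    (E : Diagram (j : ℕ)) (hE1 : (1, (j : ℕ)) ∈ E.arcs)
    (Dl : Diagram (n + 1 - (j : ℕ))) (hN : (n + 1 - (j : ℕ)) + (j : ℕ) = n + 1) :
    blockIdx n (joinD (n + 1 - (j : ℕ)) (j : ℕ) Dl E hN) = j := by
  have hjle : (j : ℕ) ≤ n + 1 := by have := j.isLt; omega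
  have harc : (n + 1 - (j : ℕ) + 1, n + 1) ∈
      (joinD (n + 1 - (j : ℕ)) (j : ℕ) Dl E hN).arcs := by
    rw [mem_joinD]
    right
    refine ⟨by omega, by omega, ?_⟩
    have e : (n + 1 - (j : ℕ) + 1 - (n + 1 - (j : ℕ)), n + 1 - (n + 1 - (j : ℕ))) =
        (1, (j : ℕ)) := by
      simp only [Prod.mk.injEq]
      omega
    rw [e]
    exact hE1
  apply Fin.ext
  rw [blockIdx_eq harc rfl]
  simp only
  omega

lemma NC2_of_fiber {j : Fin (n + 2)} {D : Diagram (n + 1)}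
    (hD : D.Modular 2 ∧ blockIdx n D = j) : D.NC2 :=
  ((Diagram.modular_two_iff D).mp hD.1).1

/-- The fiber at `j ≥ 1`. -/
def fiberEquiv (j : Fin (n + 2)) (hj : 1 ≤ (j : ℕ)) :
    {D : Diagram (n + 1) // D.Modular 2 ∧ blockIdx n D = j} ≃
      ({E : Diagram (j : ℕ) // E.Modular 2 ∧ (1, (j : ℕ)) ∈ E.arcs} ×
        {Dl : Diagram (n + 1 - (j : ℕ)) // Dl.Modular 2}) where
  toFun := fun DD =>
    (⟨rightPart (n + 1 - (j : ℕ)) (j : ℕ) DD.1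
        (fiber_hcut (by have := j.isLt; omega) DD.1),
      rightPart_modular DD.2.1
        (cover_lemma (NC2_of_fiber DD.2) (fiber_harc hj DD.2)),
      mem_right_top hj DD.2⟩,
     ⟨leftPart (n + 1 - (j : ℕ)) DD.1,
      leftPart_modular DD.2.1
        (cover_lemma (NC2_of_fiber DD.2) (fiber_harc hj DD.2))⟩)
  invFun := fun p =>
    ⟨joinD (n + 1 - (j : ℕ)) (j : ℕ) p.2.1 p.1.1 (by have := j.isLt; omega),
      joinD_modular p.2.2 p.1.2.1,
      blockIdx_join hj p.1.1 p.1.2.2 p.2.1 (by have := j.isLt; omega)⟩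
  left_inv := by
    rintro ⟨D, hD⟩
    apply Subtype.ext
    apply Diagram.ext'
    dsimp only
    have hjle : (j : ℕ) ≤ n + 1 := by have := j.isLt; omega
    have hcover := cover_lemma (NC2_of_fiber hD) (fiber_harc hj hD)
    ext ⟨x, y⟩
    rw [mem_joinD, mem_leftPart, mem_rightPart]
    constructor
    · rintro (⟨h1, h2⟩ | ⟨h1, h2, h3, h4⟩)
      · exact h1
      · have e : (x - (n + 1 - (j : ℕ)) + (n + 1 - (j : ℕ)),
            y - (n + 1 - (j : ℕ)) + (n + 1 - (j : ℕ))) = (x, y) := by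
          simp only [Prod.mk.injEq]
          omega
        rwa [e] at h3
    · intro h
      rcases hcover _ h with hcase | hcase
      · exact Or.inl ⟨h, hcase⟩
      · right
        simp only at hcase
        have hv := D.valid _ h
        simp only at hv
        refine ⟨by omega, by omega, ?_, by omega⟩
        have e : (x - (n + 1 - (j : ℕ)) + (n + 1 - (j : ℕ)),
            y - (n + 1 - (j : ℕ)) + (n + 1 - (j : ℕ))) = (x, y) := by
          simp only [Prod.mk.injEq]
          omega
        rw [e]
        exact h
  right_inv := by
    rintro ⟨⟨E, hE⟩, ⟨Dl, hDl⟩⟩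
    have hjle : (j : ℕ) ≤ n + 1 := by have := j.isLt; omega
    apply Prod.ext
    · apply Subtype.ext
      apply Diagram.ext'
      dsimp only
      ext ⟨x, y⟩
      rw [mem_rightPart, mem_joinD]
      constructor
      · rintro ⟨h1 | ⟨h1, h2, h3⟩, h4⟩
        · have := Dl.valid _ h1
          simp only at this
          omega
        · have e : (x + (n + 1 - (j : ℕ)) - (n + 1 - (j : ℕ)),
              y + (n + 1 - (j : ℕ)) - (n + 1 - (j : ℕ))) = (x, y) := by
            simp only [Prod.mk.injEq]
            omega
          rwa [e] at h3
      · intro h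
        have hv := E.valid _ h
        simp only at hv
        refine ⟨?_, by omega⟩
        right
        refine ⟨by omega, by omega, ?_⟩
        have e : (x + (n + 1 - (j : ℕ)) - (n + 1 - (j : ℕ)),
            y + (n + 1 - (j : ℕ)) - (n + 1 - (j : ℕ))) = (x, y) := by
          simp only [Prod.mk.injEq]
          omega
        rw [e]
        exact h
    · apply Subtype.ext
      apply Diagram.ext'
      dsimp only
      ext ⟨x, y⟩
      rw [mem_leftPart, mem_joinD]
      constructor
      · rintro ⟨h1 | ⟨h1, h2, h3⟩, h4⟩
        · exact h1
        · omega
      · intro h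
        have := Dl.valid _ h
        simp only at this
        exact ⟨Or.inl h, by omega⟩

end AuxDev6
noncomputable section AuxDev7

open Diagram

/-- Partition of modular diagrams on `n+1` vertices according to the block of the
last vertex. -/
def partitionEquiv (n : ℕ) :
    {D : Diagram (n + 1) // D.Modular 2} ≃
      Σ j : Fin (n + 2), {D : Diagram (n + 1) // D.Modular 2 ∧ blockIdx n D = j} where
  toFun := fun D => ⟨blockIdx n D.1, ⟨D.1, D.2, rfl⟩⟩
  invFun := fun p => ⟨p.2.1, p.2.2.1⟩
  left_inv := fun D => rfl
  right_inv := by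
    rintro ⟨j, D, hD, hj⟩
    dsimp only
    subst hj
    rfl

lemma Qcount_rec (n : ℕ) :
    Qcount 2 (n + 1) =
      Qcount 2 n + ∑ j ∈ Finset.range (n + 2), Gc j * Qcount 2 (n + 1 - j) := by
  rw [Qcount, Nat.card_congr (partitionEquiv n), card_sigma_fin]
  rw [Fin.sum_univ_succ]
  congr 1
  · exact Nat.card_congr (fiberZeroEquiv n)
  · have hterm : ∀ i : Fin (n + 1),
        Nat.card {D : Diagram (n + 1) // D.Modular 2 ∧ blockIdx n D = i.succ} =
          Gc ((i : ℕ) + 1) * Qcount 2 (n + 1 - ((i : ℕ) + 1)) := by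
      intro i
      have h1 : (1 : ℕ) ≤ ((i.succ : Fin (n + 2)) : ℕ) := by
        simp [Fin.val_succ]
      rw [Nat.card_congr (fiberEquiv i.succ h1), Nat.card_prod]
      rw [Gc, Qcount]
      simp [Fin.val_succ]
    calc (∑ i : Fin (n + 1),
        Nat.card {D : Diagram (n + 1) // D.Modular 2 ∧ blockIdx n D = i.succ})
        = ∑ i : Fin (n + 1), Gc ((i : ℕ) + 1) * Qcount 2 (n + 1 - ((i : ℕ) + 1)) := by
          exact Finset.sum_congr rfl (fun i _ => hterm i)
      _ = ∑ i ∈ Finset.range (n + 1), Gc (i + 1) * Qcount 2 (n + 1 - (i + 1)) := by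
          exact Fin.sum_univ_eq_sum_range (fun i => Gc (i + 1) * Qcount 2 (n + 1 - (i + 1))) (n + 1)
      _ = ∑ j ∈ Finset.range (n + 2), Gc j * Qcount 2 (n + 1 - j) := by
          rw [Finset.sum_range_succ' (fun j => Gc j * Qcount 2 (n + 1 - j)) (n + 1)]
          rw [Gc_small (by omega)]
          simp

end AuxDev7
noncomputable section AuxDev8

open PowerSeries

namespace SubstAux

variable {θ f g : PowerSeries ℚ}

lemma coeff_pow_zero (hθ : constantCoeff θ = 0) {i m : ℕ} (h : i < m) :
    coeff i (θ ^ m) = 0 := by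
  have hdvd : (X : ℚ⟦X⟧) ^ m ∣ θ ^ m :=
    pow_dvd_pow_of_dvd (X_dvd_iff.mpr hθ) m
  obtain ⟨r, hr⟩ := hdvd
  rw [hr, coeff_X_pow_mul']
  simp [Nat.not_le_of_lt h]

lemma substPS_add : substPS θ (f + g) = substPS θ f + substPS θ g := by
  ext n
  simp [substPS, add_mul, Finset.sum_add_distrib]

lemma substPS_one : substPS θ (1 : ℚ⟦X⟧) = 1 := by
  ext n
  simp only [substPS, coeff_mk, PowerSeries.coeff_one]
  rw [Finset.sum_eq_single 0]
  · simp
  · intro b _ hb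
    simp [hb]
  · intro h
    simp at h

lemma sum_square (n : ℕ) (hθ : constantCoeff θ = 0) :
    ∑ m ∈ Finset.range (n + 1), (coeff m (f * g)) * (coeff n (θ ^ m)) =
      ∑ a ∈ Finset.range (n + 1), ∑ b ∈ Finset.range (n + 1),
        (coeff a f) * (coeff b g) * (coeff n (θ ^ (a + b))) := by
  have lhs_eq : ∑ m ∈ Finset.range (n + 1), (coeff m (f * g)) * (coeff n (θ ^ m)) =
      ∑ m ∈ Finset.range (n + 1), ∑ ab ∈ Finset.HasAntidiagonal.antidiagonal m,
        ((coeff ab.1 f) * (coeff ab.2 g) * (coeff n (θ ^ (ab.1 + ab.2)))) := by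
    refine Finset.sum_congr rfl fun m hm => ?_
    rw [PowerSeries.coeff_mul, Finset.sum_mul]
    refine Finset.sum_congr rfl fun ab hab => ?_
    rw [Finset.HasAntidiagonal.mem_antidiagonal] at hab
    rw [hab]
  rw [lhs_eq, ← Finset.sum_product']
  rw [← Finset.sum_subset
      (Finset.filter_subset (fun x : ℕ × ℕ => x.1 + x.2 ≤ n)
        (Finset.range (n + 1) ×ˢ Finset.range (n + 1)))
      (by
        intro x hx hnx
        rw [Finset.mem_filter] at hnx
        have : ¬ (x.1 + x.2 ≤ n) := fun hc => hnx ⟨hx, hc⟩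
        rw [coeff_pow_zero hθ (by omega)]
        ring)]
  rw [Finset.sum_sigma']
  refine Finset.sum_nbij' (fun x => (x.2.1, x.2.2)) (fun y => ⟨y.1 + y.2, (y.1, y.2)⟩)
    ?_ ?_ ?_ ?_ ?_
  · rintro ⟨m, a, b⟩ hx
    simp only [Finset.mem_sigma, Finset.mem_range, Finset.HasAntidiagonal.mem_antidiagonal] at hx
    simp only [Finset.mem_filter, Finset.mem_product, Finset.mem_range]
    refine ⟨⟨?_, ?_⟩, ?_⟩ <;> omega
  · rintro ⟨a, b⟩ hy
    simp only [Finset.mem_filter, Finset.mem_product, Finset.mem_range] at hy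
    simp only [Finset.mem_sigma, Finset.mem_range, Finset.HasAntidiagonal.mem_antidiagonal]
    refine ⟨by omega, ?_⟩
    trivial
  · rintro ⟨m, a, b⟩ hx
    simp only [Finset.mem_sigma, Finset.mem_range, Finset.HasAntidiagonal.mem_antidiagonal] at hx
    simp only [Sigma.mk.inj_iff, heq_eq_eq]
    refine ⟨by omega, ?_⟩
    trivial
  · rintro ⟨a, b⟩ hy
    rfl
  · rintro ⟨m, a, b⟩ hx
    rfl

lemma substPS_mul (hθ : constantCoeff θ = 0) :
    substPS θ (f * g) = substPS θ f * substPS θ g := by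
  ext n
  rw [substPS, coeff_mk, sum_square n hθ, PowerSeries.coeff_mul]
  have step1 : ∀ ij : ℕ × ℕ, ij ∈ Finset.HasAntidiagonal.antidiagonal n →
      (coeff ij.1 (substPS θ f)) * (coeff ij.2 (substPS θ g)) =
        ∑ a ∈ Finset.range (n + 1), ∑ b ∈ Finset.range (n + 1),
          ((coeff a f) * (coeff ij.1 (θ ^ a))) *
            ((coeff b g) * (coeff ij.2 (θ ^ b))) := by
    rintro ⟨i, j⟩ hij
    rw [Finset.HasAntidiagonal.mem_antidiagonal] at hij
    simp only [substPS, coeff_mk]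
    rw [Finset.sum_subset (Finset.range_subset_range.mpr (show i + 1 ≤ n + 1 by omega))
      (by
        intro a _ ha
        rw [Finset.mem_range, not_lt] at ha
        rw [coeff_pow_zero hθ (by omega)]
        ring)]
    rw [Finset.sum_subset (Finset.range_subset_range.mpr (show j + 1 ≤ n + 1 by omega))
      (by
        intro b _ hb
        rw [Finset.mem_range, not_lt] at hb
        rw [coeff_pow_zero hθ (by omega)]
        ring)]
    rw [Finset.sum_mul_sum]
  rw [Finset.sum_congr rfl step1]
  have hcomm :
      (∑ ij ∈ Finset.HasAntidiagonal.antidiagonal n, ∑ a ∈ Finset.range (n + 1),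
        ∑ b ∈ Finset.range (n + 1),
          ((coeff a f) * (coeff ij.1 (θ ^ a))) *
            ((coeff b g) * (coeff ij.2 (θ ^ b)))) =
      ∑ a ∈ Finset.range (n + 1), ∑ b ∈ Finset.range (n + 1),
        ∑ ij ∈ Finset.HasAntidiagonal.antidiagonal n,
          ((coeff a f) * (coeff ij.1 (θ ^ a))) *
            ((coeff b g) * (coeff ij.2 (θ ^ b))) := by
    rw [Finset.sum_comm]
    exact Finset.sum_congr rfl fun a _ => Finset.sum_comm
  rw [hcomm]
  refine Finset.sum_congr rfl fun a _ => ?_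
  refine Finset.sum_congr rfl fun b _ => ?_
  have : ∀ ij : ℕ × ℕ, ij ∈ Finset.HasAntidiagonal.antidiagonal n →
      ((coeff a f) * (coeff ij.1 (θ ^ a))) *
        ((coeff b g) * (coeff ij.2 (θ ^ b))) =
      ((coeff a f) * (coeff b g)) *
        ((coeff ij.1 (θ ^ a)) * (coeff ij.2 (θ ^ b))) := by
    intro ij _
    ring
  rw [Finset.sum_congr rfl this, ← Finset.mul_sum, ← PowerSeries.coeff_mul, ← pow_add]

lemma substPS_X_mul (hθ : constantCoeff θ = 0) :
    substPS θ (X * f) = θ * substPS θ f := by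
  ext n
  rw [substPS, coeff_mk, PowerSeries.coeff_mul]
  rw [Finset.sum_range_succ' (fun m => (coeff m (X * f)) * (coeff n (θ ^ m))) n]
  have h0 : (coeff 0 (X * f)) * (coeff n (θ ^ 0)) = 0 := by
    have : coeff 0 ((X : ℚ⟦X⟧) * f) = 0 := by
      rw [PowerSeries.coeff_zero_eq_constantCoeff, map_mul]
      simp
    rw [this, zero_mul]
  rw [h0, add_zero]
  have step1 : ∀ m ∈ Finset.range n,
      (coeff (m + 1) (X * f)) * (coeff n (θ ^ (m + 1))) =
        (coeff m f) * (coeff n (θ ^ (m + 1))) := by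
    intro m _
    rw [PowerSeries.coeff_succ_X_mul]
  rw [Finset.sum_congr rfl step1]
  have step2 : ∀ ij : ℕ × ℕ, ij ∈ Finset.HasAntidiagonal.antidiagonal n →
      (coeff ij.1 θ) * (coeff ij.2 (substPS θ f)) =
        ∑ b ∈ Finset.range (n + 1),
          (coeff b f) * ((coeff ij.1 (θ ^ 1)) * (coeff ij.2 (θ ^ b))) := by
    rintro ⟨i, j⟩ hij
    rw [Finset.HasAntidiagonal.mem_antidiagonal] at hij
    simp only [substPS, coeff_mk]
    rw [Finset.sum_subset (Finset.range_subset_range.mpr (show j + 1 ≤ n + 1 by omega))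
      (by
        intro b _ hb
        rw [Finset.mem_range, not_lt] at hb
        rw [coeff_pow_zero hθ (by omega)]
        ring)]
    rw [Finset.mul_sum]
    refine Finset.sum_congr rfl fun b _ => ?_
    rw [pow_one]
    ring
  rw [Finset.sum_congr rfl step2]
  have hcomm :
      (∑ ij ∈ Finset.HasAntidiagonal.antidiagonal n, ∑ b ∈ Finset.range (n + 1),
        (coeff b f) * ((coeff ij.1 (θ ^ 1)) * (coeff ij.2 (θ ^ b)))) =
      ∑ b ∈ Finset.range (n + 1), ∑ ij ∈ Finset.HasAntidiagonal.antidiagonal n,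
        (coeff b f) * ((coeff ij.1 (θ ^ 1)) * (coeff ij.2 (θ ^ b))) :=
    Finset.sum_comm
  rw [hcomm]
  have step3 : ∀ b ∈ Finset.range (n + 1),
      (∑ ij ∈ Finset.HasAntidiagonal.antidiagonal n,
        (coeff b f) * ((coeff ij.1 (θ ^ 1)) * (coeff ij.2 (θ ^ b)))) =
      (coeff b f) * (coeff n (θ ^ (b + 1))) := by
    intro b _
    rw [← Finset.mul_sum, ← PowerSeries.coeff_mul, ← pow_add]
    ring_nf
  rw [Finset.sum_congr rfl step3, Finset.sum_range_succ,
    coeff_pow_zero hθ (show n < n + 1 by omega), mul_zero, add_zero]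

end SubstAux

end AuxDev8
noncomputable section AuxDev9

open PowerSeries SubstAux

def qS : PowerSeries ℚ := PowerSeries.mk fun n => (Qcount 2 n : ℚ)
def gS : PowerSeries ℚ := PowerSeries.mk fun n => (Gc n : ℚ)
def nfS : PowerSeries ℚ := PowerSeries.mk fun n => (NFc n : ℚ)
def kkS : PowerSeries ℚ := PowerSeries.mk fun n => (Kc n : ℚ)

lemma S0 : qS = nfS + gS := by
  ext n
  simp only [qS, nfS, gS, coeff_mk, map_add]
  rw [Qcount_split n]
  push_cast
  ring

lemma S1 : qS = 1 + X * qS + gS * qS := by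
  ext n
  rcases n with _ | n
  · simp only [qS, gS, coeff_mk, map_add, PowerSeries.coeff_one,
      PowerSeries.coeff_zero_eq_constantCoeff, map_mul, constantCoeff_X,
      zero_mul, constantCoeff_mk]
    rw [Qcount_small (by norm_num), Gc_small (by norm_num)]
    norm_num
  · rw [map_add, map_add, PowerSeries.coeff_one, PowerSeries.coeff_succ_X_mul,
      PowerSeries.coeff_mul]
    simp only [qS, gS, coeff_mk]
    rw [Finset.Nat.sum_antidiagonal_eq_sum_range_succ_mk, Qcount_rec n]
    push_cast
    simp

lemma S2 : gS = X ^ 2 * kkS := by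
  ext n
  simp only [gS, kkS, coeff_mk, PowerSeries.coeff_X_pow_mul']
  by_cases hn : 2 ≤ n
  · rw [if_pos hn]
    obtain ⟨m, rfl⟩ : ∃ m, n = m + 2 := ⟨n - 2, by omega⟩
    rw [show m + 2 - 2 = m from by omega]
    exact_mod_cast Gc_rec m
  · rw [if_neg hn]
    rw [Gc_small (by omega)]
    norm_num

lemma S3 : kkS = X ^ 2 * kkS + X ^ 2 * nfS - X ^ 2 - X ^ 3 - X ^ 4 := by
  have k0 : Kc 0 = 0 := Kc_small (by norm_num)
  have k1 : Kc 1 = 0 := Kc_small (by norm_num)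
  have k2 : Kc 2 = 0 := Kc_small (by norm_num)
  have k3 : Kc 3 = 0 := Kc_small (by norm_num)
  have k4 : Kc 4 = 0 := Kc_small (by norm_num)
  have f0 : NFc 0 = 1 := NFc_small (by norm_num)
  have f1 : NFc 1 = 1 := NFc_small (by norm_num)
  have f2 : NFc 2 = 1 := NFc_small (by norm_num)
  ext n
  simp only [kkS, nfS, coeff_mk, map_sub, map_add, PowerSeries.coeff_X_pow_mul',
    PowerSeries.coeff_X_pow]
  by_cases hn : n ≤ 4
  · interval_cases n <;> norm_num [k0, k1, k2, k3, k4, f0, f1, f2]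
  · obtain ⟨m, rfl⟩ : ∃ m, n = m + 5 := ⟨n - 5, by omega⟩
    rw [show m + 5 - 2 = m + 3 from by omega,
      if_neg (show ¬ (m + 5 = 2) by omega), if_neg (show ¬ (m + 5 = 3) by omega),
      if_neg (show ¬ (m + 5 = 4) by omega), Kc_rec (m + 3) (by omega)]
    push_cast
    ring

/-- The quadratic functional equation for `Q₂`. -/
lemma key_quadratic :
    (1 - X - X ^ 2 + X ^ 3 + 2 * X ^ 4 + X ^ 6 : PowerSeries ℚ) * qS =
      (1 - X ^ 2 + X ^ 4) + X ^ 4 * qS ^ 2 := by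
  have h1 : (1 - X ^ 2 : PowerSeries ℚ) * kkS = X ^ 2 * nfS - X ^ 2 - X ^ 3 - X ^ 4 := by
    linear_combination S3
  have h2 : (1 - X ^ 2 + X ^ 4 : PowerSeries ℚ) * gS =
      X ^ 4 * qS - X ^ 4 - X ^ 5 - X ^ 6 := by
    linear_combination X ^ 2 * h1 + (1 - (X : PowerSeries ℚ) ^ 2) * S2 - X ^ 4 * S0
  have h3 : (1 - X : PowerSeries ℚ) * qS = 1 + gS * qS := by
    linear_combination S1
  linear_combination (1 - (X : PowerSeries ℚ) ^ 2 + X ^ 4) * h3 + qS * h2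

/-- Catalan functional equation. -/
lemma catalan_eq :
    (PowerSeries.mk fun n => (catalan n : ℚ)) =
      1 + X * ((PowerSeries.mk fun n => (catalan n : ℚ)) *
        (PowerSeries.mk fun n => (catalan n : ℚ))) := by
  ext n
  rcases n with _ | n
  · simp only [coeff_mk, map_add, PowerSeries.coeff_one,
      PowerSeries.coeff_zero_eq_constantCoeff, map_mul, constantCoeff_X, zero_mul]
    simp
  · rw [map_add, PowerSeries.coeff_one, PowerSeries.coeff_succ_X_mul,
      PowerSeries.coeff_mul]
    simp only [coeff_mk]
    rw [catalan_succ' n]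
    push_cast
    simp

end AuxDev9

open PowerSeries in
/-- The OGF of modular noncrossing diagrams (case `k = 2`) satisfies
`Q_2(z) = (1 - z² + z⁴) · p(z)⁻¹ · F_2(ϑ_2(z))` where `F_2` is the Catalan generating
function. -/
theorem modular_noncrossing_gf
    (p : PowerSeries ℚ)
    (hp : p = 1 - X - X ^ 2 + X ^ 3 + 2 * X ^ 4 + X ^ 6)
    (θ₂ : PowerSeries ℚ)
    (hθ₂ : θ₂ = (X ^ 4 - X ^ 6 + X ^ 8) * (p⁻¹) ^ 2)
    (F₂ : PowerSeries ℚ)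
    (hF₂ : F₂ = PowerSeries.mk fun n => (catalan n : ℚ)) :
    PowerSeries.mk (fun n => (Qcount 2 n : ℚ)) =
      (1 - X ^ 2 + X ^ 4) * p⁻¹ * substPS θ₂ F₂ := by
  have hp1 : constantCoeff p = 1 := by
    rw [hp]
    simp only [map_add, map_sub, map_mul, map_pow, map_one, constantCoeff_X,
      constantCoeff_one]
    norm_num
  have hp0 : constantCoeff p ≠ 0 := by rw [hp1]; norm_num
  have hinv : p * p⁻¹ = 1 := PowerSeries.mul_inv_cancel p hp0
  have hθ0 : constantCoeff θ₂ = 0 := by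
    rw [hθ₂]
    simp only [map_mul, map_sub, map_pow, constantCoeff_X]
    norm_num
  set W := substPS θ₂ F₂ with hWdef
  -- the Catalan functional equation transported through substitution
  have hW : W = 1 + θ₂ * W ^ 2 := by
    rw [hWdef, hF₂]
    calc substPS θ₂ (PowerSeries.mk fun n => (catalan n : ℚ))
        = substPS θ₂ (1 + X * ((PowerSeries.mk fun n => (catalan n : ℚ)) *
            (PowerSeries.mk fun n => (catalan n : ℚ)))) := by
          conv_lhs => rw [catalan_eq]
      _ = 1 + θ₂ * ((substPS θ₂ (PowerSeries.mk fun n => (catalan n : ℚ))) *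
            (substPS θ₂ (PowerSeries.mk fun n => (catalan n : ℚ)))) := by
          rw [SubstAux.substPS_add, SubstAux.substPS_one,
            SubstAux.substPS_X_mul hθ0, SubstAux.substPS_mul hθ0]
      _ = 1 + θ₂ * (substPS θ₂ (PowerSeries.mk fun n => (catalan n : ℚ))) ^ 2 := by
          ring
  have keyp : p * qS = (1 - X ^ 2 + X ^ 4) + X ^ 4 * qS ^ 2 := by
    rw [hp]
    exact key_quadratic
  set R := (1 - X ^ 2 + X ^ 4 : PowerSeries ℚ) * p⁻¹ * W with hRdef
  have keyR : p * R = (1 - X ^ 2 + X ^ 4) + X ^ 4 * R ^ 2 := by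
    rw [hRdef, hθ₂] at *
    linear_combination ((1 - (X : PowerSeries ℚ) ^ 2 + X ^ 4) * W) * hinv +
      (1 - (X : PowerSeries ℚ) ^ 2 + X ^ 4) * hW
  have hfactor : (qS - R) * (p - X ^ 4 * (qS + R)) = 0 := by
    linear_combination keyp - keyR
  rcases mul_eq_zero.mp hfactor with h | h
  · have : qS = R := sub_eq_zero.mp h
    exact this
  · exfalso
    have hc := congrArg (constantCoeff) h
    rw [map_sub, map_mul, map_pow, constantCoeff_X, hp1, map_zero] at hc
    norm_num at hc
end

section
/- For every integer k > 2 and all integers s ≥ 1, u₁ ≥ 0, u₂ ≥ 0, the shape counts satisfy the recursion (u₂ + 1) · i_k(s+1, u₁, u₂+1) = (u₁ + 1) · i_k(s, u₁+1, u₂) + (u₁ + 1) · i_k(s−1, u₁+1, u₂). Moreover i_k(s,u₁,u₂) = 0 whenever u₁ + 2u₂ > s. -/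
open scoped Classical

-- ===================== auxiliary development =====================
namespace SR
open Diagram

abbrev Arc := ℕ × ℕ

variable {n m : ℕ}

lemma arc_pos {D : Diagram n} {a : Arc} (ha : a ∈ D.arcs) : 1 ≤ a.1 := (D.valid a ha).1
lemma arc_lt {D : Diagram n} {a : Arc} (ha : a ∈ D.arcs) : a.1 < a.2 := (D.valid a ha).2.1
lemma arc_le {D : Diagram n} {a : Arc} (ha : a ∈ D.arcs) : a.2 ≤ n := (D.valid a ha).2.2

lemma arc_unique {D : Diagram n} {a b : Arc} (ha : a ∈ D.arcs) (hb : b ∈ D.arcs)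
    (h : a.1 = b.1 ∨ a.1 = b.2 ∨ a.2 = b.1 ∨ a.2 = b.2) : a = b := by
  by_contra hne
  have := D.disj a ha b hb hne
  tauto

lemma diagram_ext {D E : Diagram n} (h : D.arcs = E.arcs) : D = E := by
  cases D; cases E; simp_all

/-- Finiteness of diagrams. -/
instance : Finite (Diagram n) := by
  have hsub : ∀ D : Diagram n, D.arcs ⊆ (Finset.range (n+1)) ×ˢ (Finset.range (n+1)) := by
    intro D a ha
    have := D.valid a ha
    simp only [Finset.mem_product, Finset.mem_range]
    omega
  exact Finite.of_injective
    (fun D : Diagram n => (⟨D.arcs, hsub D⟩ :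
      {s : Finset (ℕ × ℕ) // s ⊆ (Finset.range (n+1)) ×ˢ (Finset.range (n+1))}))
    (by intro D E h; exact diagram_ext (congrArg Subtype.val h))

def NoTwo (D : Diagram n) : Prop := ∀ a ∈ D.arcs, (a.1 + 1, a.2 - 1) ∉ D.arcs

lemma stacks_of_noTwo {D : Diagram n} (h : NoTwo D) :
    ∀ i j σ : ℕ, D.IsStack i j σ → σ = 1 := by
  rintro i j σ ⟨hpos, hmem, -, -⟩
  by_contra hne
  have h0 := hmem 0 (by omega)
  have h1 := hmem 1 (by omega)
  simp only [Nat.add_zero, Nat.sub_zero] at h0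
  exact h (i, j) h0 h1

lemma noTwo_of_stacks {D : Diagram n} (h : ∀ i j σ : ℕ, D.IsStack i j σ → σ = 1) :
    NoTwo D := by
  intro a ha hin
  classical
  set P : ℕ → Prop := fun r => ∀ r' ≤ r, (a.1 - r', a.2 + r') ∈ D.arcs with hPdef
  set Q : ℕ → Prop := fun u => ∀ u' ≤ u, (a.1 + u', a.2 - u') ∈ D.arcs with hQdef
  have hP0 : P 0 := by
    intro r' hr'
    have : r' = 0 := by omega
    subst this
    simpa using ha
  have hQ1 : Q 1 := by
    intro u' hu'
    rcases (by omega : u' = 0 ∨ u' = 1) with rfl | rfl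
    · simpa using ha
    · exact hin
  have han : a.2 ≤ n := arc_le ha
  have ha2 : a.1 < a.2 := arc_lt ha
  have ha1 : 1 ≤ a.1 := arc_pos ha
  have hn1 : 1 ≤ n := by omega
  set r₀ := Nat.findGreatest P n with hr₀def
  set t₀ := Nat.findGreatest Q n with ht₀def
  have hPr₀ : P r₀ := Nat.findGreatest_spec (Nat.zero_le n) hP0
  have hQt₀ : Q t₀ := Nat.findGreatest_spec hn1 hQ1
  have ht₀1 : 1 ≤ t₀ := Nat.le_findGreatest hn1 hQ1
  have hbot := hPr₀ r₀ le_rfl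
  have htop := hQt₀ t₀ le_rfl
  have hbv := D.valid _ hbot
  have htv := D.valid _ htop
  simp only at hbv htv
  have hr₀a : r₀ < a.1 := by omega
  have ht₀a : a.1 + t₀ < a.2 - t₀ := htv.2.1
  have hstack : D.IsStack (a.1 - r₀) (a.2 + r₀) (r₀ + t₀ + 1) := by
    refine ⟨by omega, ?_, ?_, ?_⟩
    · intro u hu
      rcases le_or_gt u r₀ with hc | hc
      · have := hPr₀ (r₀ - u) (by omega)
        have e : (a.1 - r₀ + u, a.2 + r₀ - u) = (a.1 - (r₀ - u), a.2 + (r₀ - u)) := by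
          simp only [Prod.mk.injEq]; omega
        rw [e]; exact this
      · have := hQt₀ (u - r₀) (by omega)
        have e : (a.1 - r₀ + u, a.2 + r₀ - u) = (a.1 + (u - r₀), a.2 - (u - r₀)) := by
          simp only [Prod.mk.injEq]; omega
        rw [e]; exact this
    · intro hmem
      have e : (a.1 - r₀ - 1, a.2 + r₀ + 1) = (a.1 - (r₀ + 1), a.2 + (r₀ + 1)) := by
        simp only [Prod.mk.injEq]; omega
      rw [e] at hmem
      have hv := D.valid _ hmem
      simp only at hv
      have hP' : P (r₀ + 1) := by
        intro r' hr'
        rcases le_or_gt r' r₀ with hc | hc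
        · exact hPr₀ r' hc
        · have : r' = r₀ + 1 := by omega
          subst this; exact hmem
      have := Nat.le_findGreatest (by omega : r₀ + 1 ≤ n) hP'
      omega
    · intro hmem
      have e : (a.1 - r₀ + (r₀ + t₀ + 1), a.2 + r₀ - (r₀ + t₀ + 1)) =
          (a.1 + (t₀ + 1), a.2 - (t₀ + 1)) := by
        simp only [Prod.mk.injEq]; omega
      rw [e] at hmem
      have hv := D.valid _ hmem
      simp only at hv
      have hQ' : Q (t₀ + 1) := by
        intro u' hu'
        rcases le_or_gt u' t₀ with hc | hc
        · exact hQt₀ u' hc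
        · have : u' = t₀ + 1 := by omega
          subst this; exact hmem
      have := Nat.le_findGreatest (by omega : t₀ + 1 ≤ n) hQ'
      omega
  have := h _ _ _ hstack
  omega

lemma isShape_iff {k : ℕ} {D : Diagram n} :
    D.IsShape k ↔ D.Noncrossing k ∧ D.Perfect ∧ NoTwo D := by
  constructor
  · rintro ⟨h1, h2, h3⟩; exact ⟨h1, h2, noTwo_of_stacks h3⟩
  · rintro ⟨h1, h2, h3⟩; exact ⟨h1, h2, stacks_of_noTwo h3⟩

end SR
-- ===================== end auxiliary development (part A) =====================


-- ===================== part B: the vanishing bound =====================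
namespace SR
open Diagram

variable {n m : ℕ}

noncomputable def cpF (D : Diagram n) : Finset (Arc × Arc) :=
  (D.arcs ×ˢ D.arcs).filter fun p =>
    p.1.2 = p.1.1 + 2 ∧ p.2.2 = p.2.1 + 2 ∧ p.1.1 < p.2.1 ∧ Crosses p.1 p.2

noncomputable def oaF (D : Diagram n) : Finset Arc := D.arcs.filter fun a => a.2 = a.1 + 1

lemma twoArcCrossPairs_eq (D : Diagram n) : D.twoArcCrossPairs = (cpF D).card := rfl
lemma oneArcs_eq (D : Diagram n) : D.oneArcs = (oaF D).card := rfl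

lemma mem_cpF {D : Diagram n} {p : Arc × Arc} :
    p ∈ cpF D ↔ p.1 ∈ D.arcs ∧ p.2 ∈ D.arcs ∧ p.1.2 = p.1.1 + 2 ∧ p.2.2 = p.2.1 + 2 ∧
      p.1.1 < p.2.1 ∧ Crosses p.1 p.2 := by
  simp [cpF, Finset.mem_filter, Finset.mem_product, and_assoc]

lemma mem_oaF {D : Diagram n} {a : Arc} :
    a ∈ oaF D ↔ a ∈ D.arcs ∧ a.2 = a.1 + 1 := by
  simp [oaF, Finset.mem_filter]

lemma cp_succ {D : Diagram n} {p : Arc × Arc} (hp : p ∈ cpF D) : p.2.1 = p.1.1 + 1 := by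
  rw [mem_cpF] at hp
  obtain ⟨-, -, h1, h2, h3, hc⟩ := hp
  rcases hc with ⟨a, b, c⟩ | ⟨a, b, c⟩ <;> omega

lemma two_mul_card_le (D : Diagram n) : 2 * D.arcs.card ≤ n := by
  classical
  have hdisj : ∀ a ∈ D.arcs, ∀ b ∈ D.arcs, a ≠ b →
      Disjoint ({a.1, a.2} : Finset ℕ) {b.1, b.2} := by
    intro a ha b hb hne
    have := D.disj a ha b hb hne
    simp only [Finset.disjoint_left, Finset.mem_insert, Finset.mem_singleton]
    rintro v (rfl | rfl) <;> rintro (h | h) <;> omega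
  have hcard : (D.arcs.biUnion fun a => ({a.1, a.2} : Finset ℕ)).card = 2 * D.arcs.card := by
    rw [Finset.card_biUnion hdisj]
    rw [Finset.sum_congr rfl (fun a ha => ?_), Finset.sum_const, smul_eq_mul, mul_comm]
    have := arc_lt ha
    rw [Finset.card_insert_of_notMem (by simp; omega), Finset.card_singleton]
  have hsub : (D.arcs.biUnion fun a => ({a.1, a.2} : Finset ℕ)) ⊆ Finset.Icc 1 n := by
    intro v hv
    simp only [Finset.mem_biUnion, Finset.mem_insert, Finset.mem_singleton] at hv
    obtain ⟨a, ha, hv⟩ := hv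
    have h1 := D.valid a ha
    simp only [Finset.mem_Icc]
    omega
  have := Finset.card_le_card hsub
  simpa [hcard] using this

lemma count_bound (D : Diagram n) : D.oneArcs + 2 * D.twoArcCrossPairs ≤ D.arcs.card := by
  classical
  rw [oneArcs_eq, twoArcCrossPairs_eq]
  set A1 := oaF D with hA1
  set PL := (cpF D).image Prod.fst with hPL
  set PR := (cpF D).image Prod.snd with hPR
  have hcardPL : PL.card = (cpF D).card := by
    apply Finset.card_image_of_injOn
    intro p hp q hq h
    rw [Finset.mem_coe, mem_cpF] at hp hq
    have hps : p.2.1 = p.1.1 + 1 := by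
      rcases hp.2.2.2.2.2 with ⟨a, b, c⟩ | ⟨a, b, c⟩ <;> omega
    have hqs : q.2.1 = q.1.1 + 1 := by
      rcases hq.2.2.2.2.2 with ⟨a, b, c⟩ | ⟨a, b, c⟩ <;> omega
    have h1 : p.1.1 = q.1.1 := by rw [h]
    have : p.2 = q.2 := arc_unique hp.2.1 hq.2.1 (by left; omega)
    exact Prod.ext h this
  have hcardPR : PR.card = (cpF D).card := by
    apply Finset.card_image_of_injOn
    intro p hp q hq h
    rw [Finset.mem_coe, mem_cpF] at hp hq
    have hps : p.2.1 = p.1.1 + 1 := by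
      rcases hp.2.2.2.2.2 with ⟨a, b, c⟩ | ⟨a, b, c⟩ <;> omega
    have hqs : q.2.1 = q.1.1 + 1 := by
      rcases hq.2.2.2.2.2 with ⟨a, b, c⟩ | ⟨a, b, c⟩ <;> omega
    have h2 : p.2.1 = q.2.1 := by rw [h]
    have : p.1 = q.1 := arc_unique hp.1 hq.1 (by left; omega)
    exact Prod.ext this h
  have hsub : A1 ∪ (PL ∪ PR) ⊆ D.arcs := by
    intro x hx
    simp only [Finset.mem_union, hA1, hPL, hPR, mem_oaF, Finset.mem_image] at hx
    rcases hx with h | ⟨p, hp, rfl⟩ | ⟨p, hp, rfl⟩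
    · exact h.1
    · exact (mem_cpF.1 hp).1
    · exact (mem_cpF.1 hp).2.1
  have hd1 : Disjoint A1 (PL ∪ PR) := by
    simp only [Finset.disjoint_left, hA1, hPL, hPR, mem_oaF, Finset.mem_union,
      Finset.mem_image]
    rintro x ⟨hx, hlen⟩ (⟨p, hp, rfl⟩ | ⟨p, hp, rfl⟩) <;>
      · rw [mem_cpF] at hp; omega
  have hd2 : Disjoint PL PR := by
    simp only [Finset.disjoint_left, hPL, hPR, Finset.mem_image]
    rintro x ⟨p, hp, rfl⟩ ⟨q, hq, hx⟩
    have hps := cp_succ hp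
    have hqs := cp_succ hq
    rw [mem_cpF] at hp hq
    have hx1 : q.2.1 = p.1.1 := by rw [hx]
    have hne : p.2 ≠ q.1 := by
      intro h
      have h1 : p.2.1 = q.1.1 := by rw [h]
      omega
    obtain ⟨d1, d2, d3, d4⟩ := D.disj p.2 hp.2.1 q.1 hq.1 hne
    omega
  have hcardU : (A1 ∪ (PL ∪ PR)).card = A1.card + (PL.card + PR.card) := by
    rw [Finset.card_union_of_disjoint hd1, Finset.card_union_of_disjoint hd2]
  have := Finset.card_le_card hsub
  omega

lemma icount3_eq_zero_aux {k s u₁ u₂ : ℕ} (h : s < u₁ + 2 * u₂) : icount3 k s u₁ u₂ = 0 := by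
  have : IsEmpty {D : Diagram (2 * s) // D.IsShape k ∧ D.oneArcs = u₁ ∧
      D.twoArcCrossPairs = u₂} := by
    constructor
    rintro ⟨D, hD, h1, h2⟩
    have hb := count_bound D
    have hc := two_mul_card_le D
    omega
  exact Nat.card_of_isEmpty

end SR
-- ===================== end part B =====================


-- ===================== part C: expansion / contraction =====================
namespace SR
open Diagram

variable {n m i t : ℕ}

def up (i t v : ℕ) : ℕ := if v < i then v else v + t
def dn (i t v : ℕ) : ℕ := if v < i then v else v - t

lemma up_lt_iff {a b : ℕ} : up i t a < up i t b ↔ a < b := by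
  unfold up; split_ifs <;> omega

lemma up_inj {a b : ℕ} (h : up i t a = up i t b) : a = b := by
  unfold up at h; split_ifs at h <;> omega

lemma dn_up (v : ℕ) : dn i t (up i t v) = v := by
  unfold up dn; split_ifs <;> omega

lemma up_dn {v : ℕ} (hv : v < i ∨ i + t ≤ v) : up i t (dn i t v) = v := by
  unfold up dn; split_ifs <;> omega

def mapA (ρ : ℕ → ℕ) (a : Arc) : Arc := (ρ a.1, ρ a.2)

@[simp] lemma mapA_fst (ρ : ℕ → ℕ) (a : Arc) : (mapA ρ a).1 = ρ a.1 := rfl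
@[simp] lemma mapA_snd (ρ : ℕ → ℕ) (a : Arc) : (mapA ρ a).2 = ρ a.2 := rfl

lemma mapA_up_inj : Function.Injective (mapA (up i t)) := by
  intro a b h
  have h1 : up i t a.1 = up i t b.1 := congrArg Prod.fst h
  have h2 : up i t a.2 = up i t b.2 := congrArg Prod.snd h
  exact Prod.ext (up_inj h1) (up_inj h2)

lemma crosses_up {a b : Arc} : Crosses (mapA (up i t) a) (mapA (up i t) b) ↔ Crosses a b := by
  simp only [Crosses, mapA, up_lt_iff]

/-- Window data for a local surgery. -/
structure Window (i t : ℕ) (N : Finset Arc) : Prop where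
  ht : 2 ≤ t
  bounds : ∀ a ∈ N, i ≤ a.1 ∧ a.1 < a.2 ∧ a.2 ≤ i + t + 1
  cover : ∀ v, i ≤ v → v ≤ i + t + 1 → ∃ a ∈ N, v = a.1 ∨ v = a.2
  wdisj : ∀ a ∈ N, ∀ b ∈ N, a ≠ b → a.1 ≠ b.1 ∧ a.1 ≠ b.2 ∧ a.2 ≠ b.1 ∧ a.2 ≠ b.2
  wnotwo : ∀ a ∈ N, (a.1 + 1, a.2 - 1) ∉ N
  nocross3 : ∀ a ∈ N, ∀ b ∈ N, ∀ c ∈ N, a.1 < b.1 → b.1 < c.1 → c.1 < a.2 →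
    a.2 < b.2 → b.2 < c.2 → False
  no1 : ∀ a ∈ N, a.2 ≠ a.1 + 1

def N2 (i : ℕ) : Finset Arc := {(i, i+2), (i+1, i+3)}
def N4 (i : ℕ) : Finset Arc := {(i, i+5), (i+1, i+3), (i+2, i+4)}

lemma mem_N2 {a : Arc} : a ∈ N2 i ↔ a = (i, i+2) ∨ a = (i+1, i+3) := by
  simp [N2]

lemma mem_N4 {a : Arc} : a ∈ N4 i ↔ a = (i, i+5) ∨ a = (i+1, i+3) ∨ a = (i+2, i+4) := by
  simp [N4]

lemma window2 (i : ℕ) : Window i 2 (N2 i) := by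
  constructor
  · omega
  · intro a ha; rw [mem_N2] at ha; rcases ha with rfl | rfl <;> simp <;> omega
  · intro v h1 h2
    rcases (by omega : v = i ∨ v = i + 1 ∨ v = i + 2 ∨ v = i + 3) with h | h | h | h
    · exact ⟨(i, i+2), by rw [mem_N2]; left; rfl, Or.inl h⟩
    · exact ⟨(i+1, i+3), by rw [mem_N2]; right; rfl, Or.inl h⟩
    · exact ⟨(i, i+2), by rw [mem_N2]; left; rfl, Or.inr h⟩
    · exact ⟨(i+1, i+3), by rw [mem_N2]; right; rfl, Or.inr h⟩
  · intro a ha b hb hne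
    rw [mem_N2] at ha hb
    rcases ha with rfl | rfl <;> rcases hb with rfl | rfl <;> simp_all <;> omega
  · intro a ha hb
    rw [mem_N2] at ha hb
    rcases ha with rfl | rfl <;> rcases hb with hb | hb <;>
      simp only [Prod.mk.injEq] at hb <;> omega
  · intro a ha b hb c hc h1 h2 h3 h4 h5
    rw [mem_N2] at ha hb hc
    rcases ha with rfl | rfl <;> rcases hb with rfl | rfl <;> rcases hc with rfl | rfl <;>
      simp_all <;> omega
  · intro a ha; rw [mem_N2] at ha; rcases ha with rfl | rfl <;> simp <;> omega

lemma window4 (i : ℕ) : Window i 4 (N4 i) := by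
  constructor
  · omega
  · intro a ha; rw [mem_N4] at ha; rcases ha with rfl | rfl | rfl <;> simp <;> omega
  · intro v h1 h2
    rcases (by omega : v = i ∨ v = i + 1 ∨ v = i + 2 ∨ v = i + 3 ∨ v = i + 4 ∨ v = i + 5)
      with h | h | h | h | h | h
    · exact ⟨(i, i+5), by rw [mem_N4]; tauto, Or.inl h⟩
    · exact ⟨(i+1, i+3), by rw [mem_N4]; tauto, Or.inl h⟩
    · exact ⟨(i+2, i+4), by rw [mem_N4]; tauto, Or.inl h⟩
    · exact ⟨(i+1, i+3), by rw [mem_N4]; tauto, Or.inr h⟩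
    · exact ⟨(i+2, i+4), by rw [mem_N4]; tauto, Or.inr h⟩
    · exact ⟨(i, i+5), by rw [mem_N4]; tauto, Or.inr h⟩
  · intro a ha b hb hne
    rw [mem_N4] at ha hb
    rcases ha with rfl | rfl | rfl <;> rcases hb with rfl | rfl | rfl <;> simp_all <;> omega
  · intro a ha hb
    rw [mem_N4] at ha hb
    rcases ha with rfl | rfl | rfl <;>
      rcases hb with hb | hb | hb <;> simp only [Prod.mk.injEq] at hb <;> omega
  · intro a ha b hb c hc h1 h2 h3 h4 h5
    rw [mem_N4] at ha hb hc
    rcases ha with rfl | rfl | rfl <;> rcases hb with rfl | rfl | rfl <;>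
      rcases hc with rfl | rfl | rfl <;> simp_all <;> omega
  · intro a ha; rw [mem_N4] at ha; rcases ha with rfl | rfl | rfl <;> simp <;> omega

noncomputable def exArcs (i t : ℕ) (N : Finset Arc) (F : Finset Arc) : Finset Arc :=
  N ∪ (F.erase (i, i+1)).image (mapA (up i t))

noncomputable def cxArcs (i t : ℕ) (N : Finset Arc) (F : Finset Arc) : Finset Arc :=
  insert (i, i+1) ((F \ N).image (mapA (dn i t)))

lemma mem_exArcs {N F : Finset Arc} {a : Arc} :
    a ∈ exArcs i t N F ↔ a ∈ N ∨ ∃ b, (b ∈ F ∧ b ≠ (i, i+1)) ∧ mapA (up i t) b = a := by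
  simp [exArcs, Finset.mem_union, Finset.mem_image, Finset.mem_erase, and_comm]

lemma mem_cxArcs {N F : Finset Arc} {a : Arc} :
    a ∈ cxArcs i t N F ↔ a = (i, i+1) ∨ ∃ b, (b ∈ F ∧ b ∉ N) ∧ mapA (dn i t) b = a := by
  simp [cxArcs, Finset.mem_insert, Finset.mem_image, Finset.mem_sdiff]

end SR
-- ===================== end part C base =====================


-- ===================== part C2: expansion lemmas =====================
namespace SR
open Diagram

variable {n m i t k : ℕ} {N : Finset Arc} {F : Diagram n}

lemma up_spec (v : ℕ) : (v < i ∧ up i t v = v) ∨ (i ≤ v ∧ up i t v = v + t) := by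
  unfold up; split_ifs <;> omega

lemma dn_spec (v : ℕ) : (v < i ∧ dn i t v = v) ∨ (i ≤ v ∧ dn i t v = v - t) := by
  unfold dn; split_ifs <;> omega

lemma crosses_comm {a b : Arc} : Crosses a b ↔ Crosses b a := by
  unfold Crosses; tauto

lemma erase_avoid (hγ : (i, i+1) ∈ F.arcs) {a : Arc}
    (haF : a ∈ F.arcs) (hane : a ≠ (i, i+1)) :
    (a.1 < i ∨ i + 2 ≤ a.1) ∧ (a.2 < i ∨ i + 2 ≤ a.2) := by
  have h1 : a.1 ≠ i := fun h => hane (arc_unique haF hγ (by left; exact h))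
  have h2 : a.1 ≠ i + 1 := fun h => hane (arc_unique haF hγ (by right; left; exact h))
  have h3 : a.2 ≠ i := fun h => hane (arc_unique haF hγ (by right; right; left; exact h))
  have h4 : a.2 ≠ i + 1 := fun h =>
    hane (arc_unique haF hγ (by right; right; right; exact h))
  omega

lemma image_avoid (hγ : (i,i+1) ∈ F.arcs) {a : Arc}
    (haF : a ∈ F.arcs) (hane : a ≠ (i,i+1)) :
    (up i t a.1 < i ∨ i + t + 2 ≤ up i t a.1) ∧
      (up i t a.2 < i ∨ i + t + 2 ≤ up i t a.2) := by
  have h := erase_avoid hγ haF hane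
  unfold up; constructor <;> split_ifs <;> omega

lemma image_short (hγ : (i,i+1) ∈ F.arcs) {a : Arc}
    (haF : a ∈ F.arcs) (hane : a ≠ (i,i+1)) {c : ℕ} (hc : c ≤ 2) :
    up i t a.2 = up i t a.1 + c ↔ a.2 = a.1 + c := by
  have h := erase_avoid hγ haF hane
  have hlt := arc_lt haF
  unfold up; split_ifs <;> omega

lemma no_cross_N_image (hW : Window i t N) {x y : Arc} (hx : x ∈ N)
    (hy : (y.1 < i ∨ i+t+2 ≤ y.1) ∧ (y.2 < i ∨ i+t+2 ≤ y.2)) : ¬ Crosses x y := by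
  intro hc
  have hb := hW.bounds x hx
  rcases hc with ⟨h1,h2,h3⟩ | ⟨h1,h2,h3⟩ <;> omega

/-- The expanded diagram. -/
noncomputable def exDia (hW : Window i t N) (F : Diagram n) (hγ : (i,i+1) ∈ F.arcs)
    (hm : m = n + t) : Diagram m where
  arcs := exArcs i t N F.arcs
  valid := by
    intro a ha
    rcases mem_exArcs.1 ha with hN | ⟨b, ⟨hbF, hbne⟩, rfl⟩
    · have hb := hW.bounds a hN
      have hi1 : 1 ≤ i := arc_pos hγ
      have hin : i + 1 ≤ n := arc_le hγ
      omega
    · have hv := F.valid b hbF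
      have h1 : up i t b.1 < up i t b.2 := up_lt_iff.2 hv.2.1
      have h2 := @up_spec i t b.1
      have h3 := @up_spec i t b.2
      simp only [mapA_fst, mapA_snd]
      omega
  disj := by
    intro a ha b hb hne
    rcases mem_exArcs.1 ha with hNa | ⟨a', ⟨haF, hane⟩, rfl⟩ <;>
      rcases mem_exArcs.1 hb with hNb | ⟨b', ⟨hbF, hbne⟩, rfl⟩
    · exact hW.wdisj a hNa b hNb hne
    · have hA := hW.bounds a hNa
      have hB := image_avoid (t := t) hγ hbF hbne
      simp only [mapA_fst, mapA_snd] at *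
      omega
    · have hA := hW.bounds b hNb
      have hB := image_avoid (t := t) hγ haF hane
      simp only [mapA_fst, mapA_snd] at *
      omega
    · have hne' : a' ≠ b' := fun h => hne (by rw [h])
      have hd := F.disj a' haF b' hbF hne'
      simp only [mapA_fst, mapA_snd]
      refine ⟨fun h => hd.1 (up_inj h), fun h => hd.2.1 (up_inj h),
        fun h => hd.2.2.1 (up_inj h), fun h => hd.2.2.2 (up_inj h)⟩

lemma exDia_arcs (hW : Window i t N) (hγ : (i,i+1) ∈ F.arcs) (hm : m = n + t) :
    (exDia hW F hγ hm).arcs = exArcs i t N F.arcs := rfl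

lemma ex_noncrossing (hW : Window i t N) (hγ : (i,i+1) ∈ F.arcs) (hm : m = n + t)
    (hk : 3 ≤ k) (hnc : F.Noncrossing k) : (exDia hW F hγ hm).Noncrossing k := by
  rintro ⟨a, hmem, hlt1, hlt2, hlt3⟩
  have hcr : ∀ s u : Fin k, s < u → Crosses (a s) (a u) := by
    intro s u hsu
    exact Or.inl ⟨hlt1 s u hsu, hlt3 u s, hlt2 s u hsu⟩
  have hmem' : ∀ j, a j ∈ exArcs i t N F.arcs := hmem
  by_cases hNc : ∃ j, a j ∈ N
  · obtain ⟨j₀, hj₀⟩ := hNc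
    have hall : ∀ j, a j ∈ N := by
      intro j
      rcases mem_exArcs.1 (hmem' j) with h | ⟨b, ⟨hbF, hbne⟩, hbeq⟩
      · exact h
      · exfalso
        have hav : (((a j).1 < i ∨ i+t+2 ≤ (a j).1) ∧ ((a j).2 < i ∨ i+t+2 ≤ (a j).2)) := by
          rw [← hbeq]; exact image_avoid hγ hbF hbne
        have hbnds := hW.bounds _ hj₀
        rcases lt_trichotomy j j₀ with h | h | h
        · exact no_cross_N_image hW hj₀ hav (crosses_comm.1 (hcr j j₀ h))
        · subst h; omega
        · exact no_cross_N_image hW hj₀ hav (hcr j₀ j h)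
    have h0 : (⟨0, by omega⟩ : Fin k) < ⟨1, by omega⟩ := by simp [Fin.lt_def]
    have h1 : (⟨1, by omega⟩ : Fin k) < ⟨2, by omega⟩ := by simp [Fin.lt_def]
    exact hW.nocross3 _ (hall ⟨0, by omega⟩) _ (hall ⟨1, by omega⟩) _ (hall ⟨2, by omega⟩)
      (hlt1 _ _ h0) (hlt1 _ _ h1) (hlt3 ⟨2, by omega⟩ ⟨0, by omega⟩)
      (hlt2 _ _ h0) (hlt2 _ _ h1)
  · push_neg at hNc
    have hch : ∀ j, ∃ b, (b ∈ F.arcs ∧ b ≠ (i,i+1)) ∧ mapA (up i t) b = a j := by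
      intro j
      rcases mem_exArcs.1 (hmem' j) with h | h
      · exact absurd h (hNc j)
      · exact h
    choose b hb hbeq using hch
    apply hnc
    refine ⟨b, fun j => (hb j).1, ?_, ?_, ?_⟩
    · intro s u hsu
      have := hlt1 s u hsu
      rw [← hbeq s, ← hbeq u] at this
      exact up_lt_iff.1 this
    · intro s u hsu
      have := hlt2 s u hsu
      rw [← hbeq s, ← hbeq u] at this
      exact up_lt_iff.1 this
    · intro s u
      have := hlt3 s u
      rw [← hbeq s, ← hbeq u] at this
      exact up_lt_iff.1 this

end SR
-- ===================== end part C2 =====================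


-- ===================== part C3 =====================
namespace SR
open Diagram

variable {n m i t k : ℕ} {N : Finset Arc} {F : Diagram n}

lemma ex_perfect (hW : Window i t N) (hγ : (i,i+1) ∈ F.arcs) (hm : m = n + t)
    (hp : F.Perfect) : (exDia hW F hγ hm).Perfect := by
  intro v hv1 hv2
  by_cases hvw : i ≤ v ∧ v ≤ i + t + 1
  · obtain ⟨a, haN, hva⟩ := hW.cover v hvw.1 hvw.2
    exact ⟨a, mem_exArcs.2 (Or.inl haN), hva⟩
  · have hvout : v < i ∨ i + t + 2 ≤ v := by omega
    have hin : i + 1 ≤ n := arc_le hγ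
    have hds := @dn_spec i t v
    have hw : up i t (dn i t v) = v := up_dn (by omega)
    obtain ⟨a, haF, hva⟩ := hp (dn i t v) (by omega) (by omega)
    have hane : a ≠ (i, i+1) := by
      rintro rfl
      simp only at hva
      omega
    refine ⟨mapA (up i t) a, mem_exArcs.2 (Or.inr ⟨a, ⟨haF, hane⟩, rfl⟩), ?_⟩
    rcases hva with h | h
    · left; rw [mapA_fst, ← h]; exact hw.symm
    · right; rw [mapA_snd, ← h]; exact hw.symm

lemma ex_notwo (hW : Window i t N) (hγ : (i,i+1) ∈ F.arcs) (hm : m = n + t)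
    (hnt : NoTwo F) : NoTwo (exDia hW F hγ hm) := by
  intro a ha hin
  have hi1 : 1 ≤ i := arc_pos hγ
  rcases mem_exArcs.1 ha with hNa | ⟨b, ⟨hbF, hbne⟩, rfl⟩ <;>
    rcases mem_exArcs.1 hin with hNi | ⟨c, ⟨hcF, hcne⟩, hceq⟩
  · exact hW.wnotwo a hNa hNi
  · have hb := hW.bounds a hNa
    have hc := image_avoid (t := t) hγ hcF hcne
    have h1 : up i t c.1 = a.1 + 1 := congrArg Prod.fst hceq
    omega
  · -- a image, inner ∈ N
    have hb := image_avoid (t := t) hγ hbF hbne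
    have hbav := erase_avoid hγ hbF hbne
    have hc := hW.bounds _ hNi
    simp only [mapA_fst, mapA_snd] at hb hc
    have hs1 := @up_spec i t b.1
    have hs2 := @up_spec i t b.2
    have hlt := arc_lt hbF
    have hb1 : b.1 = i - 1 := by omega
    have hb2 : b.2 = i + 2 := by omega
    have : (b.1 + 1, b.2 - 1) ∈ F.arcs := by
      rw [show (b.1 + 1, b.2 - 1) = (i, i+1) from by rw [hb1, hb2]; simp; omega]
      exact hγ
    exact hnt b hbF this
  · -- both images
    have hbav := erase_avoid hγ hbF hbne
    have hcav := erase_avoid hγ hcF hcne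
    have h1 : up i t c.1 = up i t b.1 + 1 := congrArg Prod.fst hceq
    have h2 : up i t c.2 = up i t b.2 - 1 := congrArg Prod.snd hceq
    have hs1 := @up_spec i t b.1
    have hs2 := @up_spec i t b.2
    have hs3 := @up_spec i t c.1
    have hs4 := @up_spec i t c.2
    have hlt := arc_lt hbF
    have hltc := arc_lt hcF
    have ht2 := hW.ht
    have : (b.1 + 1, b.2 - 1) ∈ F.arcs := by
      rw [show (b.1 + 1, b.2 - 1) = c from Prod.ext (by omega) (by omega)]
      exact hcF
    exact hnt b hbF this

lemma ex_oaF (hW : Window i t N) (hγ : (i,i+1) ∈ F.arcs) (hm : m = n + t) :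
    oaF (exDia hW F hγ hm) = ((oaF F).erase (i,i+1)).image (mapA (up i t)) := by
  ext a
  simp only [mem_oaF, Finset.mem_image, Finset.mem_erase]
  constructor
  · rintro ⟨ha, hlen⟩
    rcases mem_exArcs.1 ha with hNa | ⟨b, ⟨hbF, hbne⟩, rfl⟩
    · exact absurd hlen (hW.no1 a hNa)
    · refine ⟨b, ⟨hbne, hbF, ?_⟩, rfl⟩
      simp only [mapA_fst, mapA_snd] at hlen
      exact (image_short hγ hbF hbne (by omega)).1 hlen
  · rintro ⟨b, ⟨hbne, hbF, hlen⟩, rfl⟩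
    refine ⟨mem_exArcs.2 (Or.inr ⟨b, ⟨hbF, hbne⟩, rfl⟩), ?_⟩
    simp only [mapA_fst, mapA_snd]
    exact (image_short hγ hbF hbne (by omega)).2 hlen

lemma ex_oneArcs (hW : Window i t N) (hγ : (i,i+1) ∈ F.arcs) (hm : m = n + t) :
    F.oneArcs = (exDia hW F hγ hm).oneArcs + 1 := by
  have hmem : (i, i+1) ∈ oaF F := mem_oaF.2 ⟨hγ, rfl⟩
  have hpos : 1 ≤ (oaF F).card := Finset.card_pos.2 ⟨_, hmem⟩
  rw [oneArcs_eq, oneArcs_eq, ex_oaF hW hγ hm,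
    Finset.card_image_of_injective _ mapA_up_inj, Finset.card_erase_of_mem hmem]
  omega

lemma ex_cpF (hW : Window i t N) (hγ : (i,i+1) ∈ F.arcs) (hm : m = n + t)
    {P₀ : Arc × Arc}
    (hNp : ∀ p : Arc × Arc, (p.1 ∈ N ∧ p.2 ∈ N ∧ p.1.2 = p.1.1 + 2 ∧ p.2.2 = p.2.1 + 2 ∧
      p.1.1 < p.2.1 ∧ Crosses p.1 p.2) ↔ p = P₀) :
    cpF (exDia hW F hγ hm) =
      insert P₀ ((cpF F).image (Prod.map (mapA (up i t)) (mapA (up i t)))) := by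
  ext p
  simp only [mem_cpF, Finset.mem_insert, Finset.mem_image]
  constructor
  · rintro ⟨h1, h2, h3, h4, h5, h6⟩
    rcases mem_exArcs.1 h1 with hNa | ⟨b, ⟨hbF, hbne⟩, hbeq⟩ <;>
      rcases mem_exArcs.1 h2 with hNb | ⟨c, ⟨hcF, hcne⟩, hceq⟩
    · left; exact (hNp p).1 ⟨hNa, hNb, h3, h4, h5, h6⟩
    · exfalso
      refine no_cross_N_image hW hNa ?_ h6
      rw [← hceq]
      exact image_avoid (t := t) hγ hcF hcne
    · exfalso
      refine no_cross_N_image hW hNb ?_ (crosses_comm.1 h6)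
      rw [← hbeq]
      exact image_avoid (t := t) hγ hbF hbne
    · right
      rw [← hbeq] at h3 h5 h6
      rw [← hceq] at h4 h5 h6
      simp only [mapA_fst, mapA_snd] at h3 h4 h5
      exact ⟨(b, c), ⟨hbF, hcF, (image_short hγ hbF hbne (by omega)).1 h3,
        (image_short hγ hcF hcne (by omega)).1 h4, up_lt_iff.1 h5, crosses_up.1 h6⟩,
        Prod.ext hbeq hceq⟩
  · rintro (rfl | ⟨q, hq, rfl⟩)
    · obtain ⟨hq1, hq2, hq3, hq4, hq5, hq6⟩ := (hNp p).2 rfl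
      exact ⟨mem_exArcs.2 (Or.inl hq1), mem_exArcs.2 (Or.inl hq2), hq3, hq4, hq5, hq6⟩
    · obtain ⟨hq1, hq2, hq3, hq4, hq5, hq6⟩ := hq
      have hne1 : q.1 ≠ (i, i+1) := by
        intro h
        rw [h] at hq3
        simp at hq3
      have hne2 : q.2 ≠ (i, i+1) := by
        intro h
        rw [h] at hq4
        simp at hq4
      refine ⟨mem_exArcs.2 (Or.inr ⟨q.1, ⟨hq1, hne1⟩, rfl⟩),
        mem_exArcs.2 (Or.inr ⟨q.2, ⟨hq2, hne2⟩, rfl⟩), ?_, ?_, ?_, ?_⟩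
      · simp only [Prod.map_fst, mapA_fst, mapA_snd]
        exact (image_short hγ hq1 hne1 (by omega)).2 hq3
      · simp only [Prod.map_snd, mapA_fst, mapA_snd]
        exact (image_short hγ hq2 hne2 (by omega)).2 hq4
      · simp only [Prod.map_fst, Prod.map_snd, mapA_fst]
        exact up_lt_iff.2 hq5
      · exact crosses_up.2 hq6

lemma ex_twoArcCrossPairs (hW : Window i t N) (hγ : (i,i+1) ∈ F.arcs) (hm : m = n + t)
    {P₀ : Arc × Arc}
    (hNp : ∀ p : Arc × Arc, (p.1 ∈ N ∧ p.2 ∈ N ∧ p.1.2 = p.1.1 + 2 ∧ p.2.2 = p.2.1 + 2 ∧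
      p.1.1 < p.2.1 ∧ Crosses p.1 p.2) ↔ p = P₀) :
    (exDia hW F hγ hm).twoArcCrossPairs = F.twoArcCrossPairs + 1 := by
  have hP01 : P₀.1 ∈ N := ((hNp P₀).2 rfl).1
  have hnotmem : P₀ ∉ (cpF F).image (Prod.map (mapA (up i t)) (mapA (up i t))) := by
    rw [Finset.mem_image]
    rintro ⟨q, hq, hqeq⟩
    rw [mem_cpF] at hq
    have hne1 : q.1 ≠ (i, i+1) := by
      intro h
      have := hq.2.2.1
      rw [h] at this
      simp at this
    have hb := hW.bounds _ hP01
    have hav : (up i t q.1.1 < i ∨ i + t + 2 ≤ up i t q.1.1) := (image_avoid hγ hq.1 hne1).1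
    have : up i t q.1.1 = P₀.1.1 := by
      rw [← hqeq]; rfl
    omega
  have hinj : Function.Injective (Prod.map (mapA (up i t)) (mapA (up i t))) :=
    Function.Injective.prodMap mapA_up_inj mapA_up_inj
  rw [twoArcCrossPairs_eq, twoArcCrossPairs_eq, ex_cpF hW hγ hm hNp,
    Finset.card_insert_of_notMem hnotmem, Finset.card_image_of_injective _ hinj]

lemma cx_ex (hW : Window i t N) (hγ : (i,i+1) ∈ F.arcs) :
    cxArcs i t N (exArcs i t N F.arcs) = F.arcs := by
  ext a
  rw [mem_cxArcs]
  constructor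
  · rintro (rfl | ⟨b, ⟨hb, hbN⟩, rfl⟩)
    · exact hγ
    · rcases mem_exArcs.1 hb with hNb | ⟨c, ⟨hcF, hcne⟩, rfl⟩
      · exact absurd hNb hbN
      · have : mapA (dn i t) (mapA (up i t) c) = c := Prod.ext (dn_up c.1) (dn_up c.2)
        rw [this]
        exact hcF
  · intro haF
    by_cases hne : a = (i, i+1)
    · left; exact hne
    · right
      refine ⟨mapA (up i t) a, ⟨mem_exArcs.2 (Or.inr ⟨a, ⟨haF, hne⟩, rfl⟩), ?_⟩,
        Prod.ext (dn_up a.1) (dn_up a.2)⟩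
      intro hN
      have hb := hW.bounds _ hN
      have hav := image_avoid (t := t) hγ haF hne
      simp only [mapA_fst, mapA_snd] at hb
      omega

end SR
-- ===================== end part C3 =====================


-- ===================== part C4: contraction =====================
namespace SR
open Diagram

variable {n' m i t k : ℕ} {N : Finset Arc} {D : Diagram m}

lemma window_pos (hW : Window i t N) (hNsub : N ⊆ D.arcs) : 1 ≤ i := by
  obtain ⟨a, haN, hva⟩ := hW.cover i le_rfl (by omega)
  have hb := hW.bounds a haN
  have := arc_pos (hNsub haN)
  omega

lemma window_le (hW : Window i t N) (hNsub : N ⊆ D.arcs) : i + t + 1 ≤ m := by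
  obtain ⟨a, haN, hva⟩ := hW.cover (i+t+1) (by omega) le_rfl
  have hb := hW.bounds a haN
  have := arc_le (hNsub haN)
  omega

lemma outside_avoid (hW : Window i t N) (hNsub : N ⊆ D.arcs) {a : Arc}
    (haD : a ∈ D.arcs) (haN : a ∉ N) :
    (a.1 < i ∨ i + t + 2 ≤ a.1) ∧ (a.2 < i ∨ i + t + 2 ≤ a.2) := by
  constructor
  · by_contra h
    push_neg at h
    obtain ⟨b, hbN, hvb⟩ := hW.cover a.1 (by omega) (by omega)
    have : a = b := arc_unique haD (hNsub hbN) (by tauto)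
    exact haN (this ▸ hbN)
  · by_contra h
    push_neg at h
    obtain ⟨b, hbN, hvb⟩ := hW.cover a.2 (by omega) (by omega)
    have : a = b := arc_unique haD (hNsub hbN) (by tauto)
    exact haN (this ▸ hbN)

/-- The contracted diagram. -/
noncomputable def cxDia (hW : Window i t N) (D : Diagram m) (hNsub : N ⊆ D.arcs)
    (hn : m = n' + t) : Diagram n' where
  arcs := cxArcs i t N D.arcs
  valid := by
    have hi1 := window_pos hW hNsub
    have hitm := window_le hW hNsub
    intro a ha
    rcases mem_cxArcs.1 ha with rfl | ⟨b, ⟨hbD, hbN⟩, rfl⟩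
    · simp only
      omega
    · have hav := outside_avoid hW hNsub hbD hbN
      have hv := D.valid b hbD
      have hs1 := @dn_spec i t b.1
      have hs2 := @dn_spec i t b.2
      simp only [mapA_fst, mapA_snd]
      omega
  disj := by
    have hi1 := window_pos hW hNsub
    intro a ha b hb hne
    rcases mem_cxArcs.1 ha with rfl | ⟨a', ⟨haD, haN⟩, rfl⟩ <;>
      rcases mem_cxArcs.1 hb with h' | ⟨b', ⟨hbD, hbN⟩, rfl⟩
    · exact absurd h'.symm hne
    · have hav := outside_avoid hW hNsub hbD hbN
      have hs1 := @dn_spec i t b'.1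
      have hs2 := @dn_spec i t b'.2
      simp only [mapA_fst, mapA_snd]
      omega
    · subst h'
      have hav := outside_avoid hW hNsub haD haN
      have hs1 := @dn_spec i t a'.1
      have hs2 := @dn_spec i t a'.2
      simp only [mapA_fst, mapA_snd]
      omega
    · have hne' : a' ≠ b' := fun h => hne (by rw [h])
      have hd := D.disj a' haD b' hbD hne'
      have hava := outside_avoid hW hNsub haD haN
      have havb := outside_avoid hW hNsub hbD hbN
      have hs1 := @dn_spec i t a'.1
      have hs2 := @dn_spec i t a'.2
      have hs3 := @dn_spec i t b'.1
      have hs4 := @dn_spec i t b'.2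
      have ht2 := hW.ht
      simp only [mapA_fst, mapA_snd]
      omega

lemma cxDia_arcs (hW : Window i t N) (hNsub : N ⊆ D.arcs) (hn : m = n' + t) :
    (cxDia hW D hNsub hn).arcs = cxArcs i t N D.arcs := rfl

lemma cx_gamma (hW : Window i t N) (hNsub : N ⊆ D.arcs) (hn : m = n' + t) :
    (i, i+1) ∈ (cxDia hW D hNsub hn).arcs :=
  Finset.mem_insert_self _ _

lemma dn_lt_iff' {a b : ℕ} (ha : a < i ∨ i + t + 2 ≤ a) (hb : b < i ∨ i + t + 2 ≤ b) :
    dn i t a < dn i t b ↔ a < b := by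
  unfold dn; split_ifs <;> omega

lemma cx_noncrossing (hW : Window i t N) (hNsub : N ⊆ D.arcs) (hn : m = n' + t)
    (hk : 3 ≤ k) (hnc : D.Noncrossing k) : (cxDia hW D hNsub hn).Noncrossing k := by
  rintro ⟨a, hmem, hlt1, hlt2, hlt3⟩
  have hγ' : ∀ j : Fin k, a j ≠ (i, i+1) := by
    have hk0 : 0 < k := by omega
    have hk1 : 1 < k := by omega
    intro j hj
    by_cases hj0 : j = ⟨0, hk0⟩
    · have h1 := hlt1 ⟨0, hk0⟩ ⟨1, hk1⟩ (by rw [Fin.lt_def]; exact Nat.zero_lt_one)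
      have h2 := hlt3 ⟨1, hk1⟩ ⟨0, hk0⟩
      rw [← hj0, hj] at h1 h2
      simp only at h1 h2
      omega
    · have hj0' : (j : ℕ) ≠ 0 := fun h => hj0 (Fin.ext h)
      have hlt : (⟨0, hk0⟩ : Fin k) < j := by
        rw [Fin.lt_def]
        exact Nat.pos_of_ne_zero hj0'
      have h2 := hlt2 ⟨0, hk0⟩ j hlt
      have h3 := hlt3 j ⟨0, hk0⟩
      rw [hj] at h2 h3
      simp only at h2 h3
      omega
  have hch : ∀ j, ∃ b, (b ∈ D.arcs ∧ b ∉ N) ∧ mapA (dn i t) b = a j := by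
    intro j
    rcases mem_cxArcs.1 (hmem j) with h | h
    · exact absurd h (hγ' j)
    · exact h
  choose b hb hbeq using hch
  apply hnc
  have key : ∀ s u : Fin k, ((a s).1 < (a u).1 ↔ (b s).1 < (b u).1) ∧
      ((a s).2 < (a u).2 ↔ (b s).2 < (b u).2) ∧ ((a s).1 < (a u).2 ↔ (b s).1 < (b u).2) := by
    intro s u
    have havs := outside_avoid hW hNsub (hb s).1 (hb s).2
    have havu := outside_avoid hW hNsub (hb u).1 (hb u).2
    rw [← hbeq s, ← hbeq u]
    simp only [mapA_fst, mapA_snd]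
    exact ⟨dn_lt_iff' havs.1 havu.1, dn_lt_iff' havs.2 havu.2, dn_lt_iff' havs.1 havu.2⟩
  refine ⟨b, fun j => (hb j).1, ?_, ?_, ?_⟩
  · intro s u hsu
    exact (key s u).1.1 (hlt1 s u hsu)
  · intro s u hsu
    exact (key s u).2.1.1 (hlt2 s u hsu)
  · intro s u
    exact (key s u).2.2.1 (hlt3 s u)

lemma cx_perfect (hW : Window i t N) (hNsub : N ⊆ D.arcs) (hn : m = n' + t)
    (hp : D.Perfect) : (cxDia hW D hNsub hn).Perfect := by
  have hi1 := window_pos hW hNsub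
  have hitm := window_le hW hNsub
  intro v hv1 hv2
  rcases (by omega : v = i ∨ v = i + 1 ∨ v < i ∨ i + 2 ≤ v) with h | h | hv | hv
  · exact ⟨(i, i+1), cx_gamma hW hNsub hn, Or.inl h⟩
  · exact ⟨(i, i+1), cx_gamma hW hNsub hn, Or.inr h⟩
  · obtain ⟨a, haD, hva⟩ := hp v (by omega) (by omega)
    have haN : a ∉ N := by
      intro hN
      have hb := hW.bounds a hN
      omega
    refine ⟨mapA (dn i t) a, mem_cxArcs.2 (Or.inr ⟨a, ⟨haD, haN⟩, rfl⟩), ?_⟩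
    have hav := outside_avoid hW hNsub haD haN
    have hs1 := @dn_spec i t a.1
    have hs2 := @dn_spec i t a.2
    simp only [mapA_fst, mapA_snd]
    omega
  · obtain ⟨a, haD, hva⟩ := hp (v + t) (by omega) (by omega)
    have haN : a ∉ N := by
      intro hN
      have hb := hW.bounds a hN
      omega
    refine ⟨mapA (dn i t) a, mem_cxArcs.2 (Or.inr ⟨a, ⟨haD, haN⟩, rfl⟩), ?_⟩
    have hav := outside_avoid hW hNsub haD haN
    have hs1 := @dn_spec i t a.1
    have hs2 := @dn_spec i t a.2
    simp only [mapA_fst, mapA_snd]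
    omega

lemma cx_notwo (hW : Window i t N) (hNsub : N ⊆ D.arcs) (hn : m = n' + t)
    (hwrap : (i, i + t + 1) ∈ N ∨ (i - 1, i + t + 2) ∉ D.arcs)
    (hnt : NoTwo D) : NoTwo (cxDia hW D hNsub hn) := by
  have hi1 := window_pos hW hNsub
  have hitm := window_le hW hNsub
  have ht2 := hW.ht
  intro a ha hin
  rcases mem_cxArcs.1 ha with rfl | ⟨b, ⟨hbD, hbN⟩, rfl⟩
  · -- a = (i, i+1), inner = (i+1, i) : impossible
    simp only at hin
    rcases mem_cxArcs.1 hin with h | ⟨c, ⟨hcD, hcN⟩, hceq⟩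
    · rw [Prod.ext_iff] at h
      simp only at h
      omega
    · have hav := outside_avoid hW hNsub hcD hcN
      have hlt := arc_lt hcD
      have hs1 := @dn_spec i t c.1
      have hs2 := @dn_spec i t c.2
      have h1 : dn i t c.1 = i + 1 := by
        have := congrArg Prod.fst hceq; simpa using this
      have h2 : dn i t c.2 = i + 1 - 1 := by
        have := congrArg Prod.snd hceq; simpa using this
      omega
  · rcases mem_cxArcs.1 hin with h | ⟨c, ⟨hcD, hcN⟩, hceq⟩
    · -- inner is (i, i+1): b must be the wrap arc
      have hav := outside_avoid hW hNsub hbD hbN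
      have hs1 := @dn_spec i t b.1
      have hs2 := @dn_spec i t b.2
      rw [Prod.ext_iff] at h
      simp only [mapA_fst, mapA_snd] at h
      have hb1 : b.1 = i - 1 := by omega
      have hb2 : b.2 = i + t + 2 := by omega
      rcases hwrap with hw | hw
      · refine hnt b hbD ?_
        rw [show (b.1 + 1, b.2 - 1) = (i, i + t + 1) from by
          rw [Prod.ext_iff]; constructor <;> simp <;> omega]
        exact hNsub hw
      · refine hw ?_
        rw [show ((i:ℕ) - 1, i + t + 2) = b from by
          rw [Prod.ext_iff]; constructor <;> simp <;> omega]
        exact hbD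
    · -- both images
      have havb := outside_avoid hW hNsub hbD hbN
      have havc := outside_avoid hW hNsub hcD hcN
      have hs1 := @dn_spec i t b.1
      have hs2 := @dn_spec i t b.2
      have hs3 := @dn_spec i t c.1
      have hs4 := @dn_spec i t c.2
      have hltb := arc_lt hbD
      have hltc := arc_lt hcD
      have h1 : dn i t c.1 = dn i t b.1 + 1 := by
        have := congrArg Prod.fst hceq; simpa using this
      have h2 : dn i t c.2 = dn i t b.2 - 1 := by
        have := congrArg Prod.snd hceq; simpa using this
      refine hnt b hbD ?_
      rw [show (b.1 + 1, b.2 - 1) = c from Prod.ext (by omega) (by omega)]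
      exact hcD

lemma ex_cx (hW : Window i t N) (hNsub : N ⊆ D.arcs) :
    exArcs i t N (cxArcs i t N D.arcs) = D.arcs := by
  ext a
  rw [mem_exArcs]
  constructor
  · rintro (hN | ⟨b, ⟨hb, hbne⟩, rfl⟩)
    · exact hNsub hN
    · rcases mem_cxArcs.1 hb with rfl | ⟨c, ⟨hcD, hcN⟩, rfl⟩
      · exact absurd rfl hbne
      · have hav := outside_avoid hW hNsub hcD hcN
        have : mapA (up i t) (mapA (dn i t) c) = c :=
          Prod.ext (up_dn (by omega)) (up_dn (by omega))
        rw [this]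
        exact hcD
  · intro haD
    by_cases hN : a ∈ N
    · exact Or.inl hN
    · right
      have hav := outside_avoid hW hNsub haD hN
      have hs1 := @dn_spec i t a.1
      have hs2 := @dn_spec i t a.2
      have hi1 := window_pos hW hNsub
      refine ⟨mapA (dn i t) a, ⟨mem_cxArcs.2 (Or.inr ⟨a, ⟨haD, hN⟩, rfl⟩), ?_⟩,
        Prod.ext (up_dn (by omega)) (up_dn (by omega))⟩
      intro h
      have h1 : dn i t a.1 = i := congrArg Prod.fst h
      omega

end SR
-- ===================== end part C4 =====================


-- ===================== part D1: assembly helpers =====================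
namespace SR
open Diagram

variable {n m i t k : ℕ}

lemma pair_eq {a b c d : ℕ} (h1 : a = c) (h2 : b = d) : (a, b) = ((c, d) : Arc) := by
  rw [h1, h2]

lemma oneArcs_congr {n₁ n₂ : ℕ} {D₁ : Diagram n₁} {D₂ : Diagram n₂}
    (h : D₁.arcs = D₂.arcs) : D₁.oneArcs = D₂.oneArcs := by
  unfold Diagram.oneArcs; rw [h]

lemma tacp_congr {n₁ n₂ : ℕ} {D₁ : Diagram n₁} {D₂ : Diagram n₂}
    (h : D₁.arcs = D₂.arcs) : D₁.twoArcCrossPairs = D₂.twoArcCrossPairs := by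
  unfold Diagram.twoArcCrossPairs; rw [h]

lemma crosses_adj (x : ℕ) : Crosses (x, x+2) (x+1, x+3) :=
  Or.inl ⟨show x < x + 1 by omega, show x + 1 < x + 2 by omega, show x + 2 < x + 3 by omega⟩

lemma N2_pairs (i : ℕ) :
    ∀ p : Arc × Arc, (p.1 ∈ N2 i ∧ p.2 ∈ N2 i ∧ p.1.2 = p.1.1 + 2 ∧ p.2.2 = p.2.1 + 2 ∧
      p.1.1 < p.2.1 ∧ Crosses p.1 p.2) ↔ p = ((i, i+2), (i+1, i+3)) := by
  intro p
  constructor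
  · rintro ⟨h1, h2, h3, h4, h5, h6⟩
    rw [mem_N2] at h1 h2
    rcases h1 with h1 | h1 <;> rcases h2 with h2 | h2 <;>
      rw [h1, h2] at h5 <;> simp only at h5
    · omega
    · exact Prod.ext h1 h2
    · omega
    · omega
  · rintro rfl
    exact ⟨mem_N2.2 (Or.inl rfl), mem_N2.2 (Or.inr rfl), rfl, rfl,
      show i < i + 1 by omega, crosses_adj i⟩

lemma N4_pairs (i : ℕ) :
    ∀ p : Arc × Arc, (p.1 ∈ N4 i ∧ p.2 ∈ N4 i ∧ p.1.2 = p.1.1 + 2 ∧ p.2.2 = p.2.1 + 2 ∧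
      p.1.1 < p.2.1 ∧ Crosses p.1 p.2) ↔ p = ((i+1, i+3), (i+2, i+4)) := by
  intro p
  constructor
  · rintro ⟨h1, h2, h3, h4, h5, h6⟩
    rw [mem_N4] at h1 h2
    rcases h1 with h1 | h1 | h1 <;> rcases h2 with h2 | h2 | h2 <;>
      rw [h1] at h3 <;> rw [h2] at h4 <;> rw [h1, h2] at h5 <;> simp only at h3 h4 h5
    · omega
    · omega
    · omega
    · omega
    · omega
    · exact Prod.ext h1 h2
    · omega
    · omega
    · omega
  · rintro rfl
    refine ⟨mem_N4.2 (Or.inr (Or.inl rfl)), mem_N4.2 (Or.inr (Or.inr rfl)), rfl, rfl,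
      show i + 1 < i + 2 by omega, ?_⟩
    exact Or.inl ⟨show i + 1 < i + 2 by omega, show i + 2 < i + 3 by omega,
      show i + 3 < i + 4 by omega⟩

lemma ex2_no_wrap {F : Diagram n} (hγ : (i, i+1) ∈ F.arcs) (hnt : NoTwo F) :
    (i - 1, i + 4) ∉ exArcs i 2 (N2 i) F.arcs := by
  have hi1 : 1 ≤ i := arc_pos hγ
  intro h
  rcases mem_exArcs.1 h with hN | ⟨b, ⟨hbF, hbne⟩, hbeq⟩
  · rw [mem_N2, Prod.ext_iff, Prod.ext_iff] at hN
    simp only at hN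
    omega
  · have hav := erase_avoid hγ hbF hbne
    have h1 : up i 2 b.1 = i - 1 := by
      have := congrArg Prod.fst hbeq; simpa using this
    have h2 : up i 2 b.2 = i + 4 := by
      have := congrArg Prod.snd hbeq; simpa using this
    have hs1 := @up_spec i 2 b.1
    have hs2 := @up_spec i 2 b.2
    have hb1 : b.1 = i - 1 := by omega
    have hb2 : b.2 = i + 2 := by omega
    refine hnt b hbF ?_
    have e : (b.1 + 1, b.2 - 1) = ((i : ℕ), i + 1) := pair_eq (by omega) (by omega)
    rw [e]
    exact hγ

lemma sub2 {D : Diagram m} {x : ℕ} (hp1 : (x, x+2) ∈ D.arcs)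
    (hp2 : (x+1, x+3) ∈ D.arcs) : N2 x ⊆ D.arcs := by
  intro a ha
  rw [mem_N2] at ha
  rcases ha with rfl | rfl
  · exact hp1
  · exact hp2

lemma sub4 {D : Diagram m} {x : ℕ} (hp1 : (x, x+2) ∈ D.arcs) (hp2 : (x+1, x+3) ∈ D.arcs)
    (hw : (x - 1, x + 4) ∈ D.arcs) (hx2 : 2 ≤ x) : N4 (x-1) ⊆ D.arcs := by
  intro a ha
  rw [mem_N4] at ha
  rcases ha with rfl | rfl | rfl
  · have e : ((x:ℕ)-1, x-1+5) = (x-1, x+4) := pair_eq rfl (by omega)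
    rw [e]; exact hw
  · have e : ((x:ℕ)-1+1, x-1+3) = (x, x+2) := pair_eq (by omega) (by omega)
    rw [e]; exact hp1
  · have e : ((x:ℕ)-1+2, x-1+4) = (x+1, x+3) := pair_eq (by omega) (by omega)
    rw [e]; exact hp2

/-- Shape data predicate. -/
def SH (k : ℕ) {n : ℕ} (u₁ u₂ : ℕ) (D : Diagram n) : Prop :=
  D.IsShape k ∧ D.oneArcs = u₁ ∧ D.twoArcCrossPairs = u₂

end SR
-- ===================== end part D1 =====================


-- ===================== part D2: case packages =====================
namespace SR
open Diagram

variable {k s u₁ u₂ : ℕ}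

/-- Contraction package, case 1 (no wrap). -/
lemma pack_cx2 (hk : 2 < k) {m n' x : ℕ} {D : Diagram m}
    (hD : SH k u₁ (u₂+1) D) (hp1 : (x, x+2) ∈ D.arcs) (hp2 : (x+1, x+3) ∈ D.arcs)
    (hw : (x - 1, x + 4) ∉ D.arcs) (hn : m = n' + 2) :
    SH k (u₁+1) u₂ (cxDia (window2 x) D (sub2 hp1 hp2) hn) ∧
      (x, x+1) ∈ oaF (cxDia (window2 x) D (sub2 hp1 hp2) hn) := by
  obtain ⟨hsh, hu1, hu2⟩ := hD
  rw [isShape_iff] at hsh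
  obtain ⟨hnc, hpf, hnt⟩ := hsh
  set F' := cxDia (window2 x) D (sub2 hp1 hp2) hn with hF'
  have hγ' : (x, x+1) ∈ F'.arcs := cx_gamma _ _ _
  have hm' : m = n' + 2 := hn
  have hE : (exDia (window2 x) F' hγ' hm').arcs = D.arcs := by
    rw [exDia_arcs]
    have : F'.arcs = cxArcs x 2 (N2 x) D.arcs := rfl
    rw [this]
    exact ex_cx (window2 x) (sub2 hp1 hp2)
  have hnt' : NoTwo F' := by
    refine cx_notwo (window2 x) (sub2 hp1 hp2) hn (Or.inr ?_) hnt
    rw [show ((x:ℕ) - 1, x + 2 + 2) = (x - 1, x + 4) from pair_eq rfl (by omega)]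
    exact hw
  have h1 : F'.oneArcs = (exDia (window2 x) F' hγ' hm').oneArcs + 1 :=
    ex_oneArcs (window2 x) hγ' hm'
  have h2 : (exDia (window2 x) F' hγ' hm').twoArcCrossPairs = F'.twoArcCrossPairs + 1 :=
    ex_twoArcCrossPairs (window2 x) hγ' hm' (N2_pairs x)
  have e1 : (exDia (window2 x) F' hγ' hm').oneArcs = u₁ := by
    rw [oneArcs_congr hE, hu1]
  have e2 : (exDia (window2 x) F' hγ' hm').twoArcCrossPairs = u₂ + 1 := by
    rw [tacp_congr hE, hu2]
  refine ⟨⟨isShape_iff.2 ⟨cx_noncrossing (window2 x) _ hn (by omega) hnc,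
    cx_perfect (window2 x) _ hn hpf, hnt'⟩, by omega, by omega⟩, ?_⟩
  exact mem_oaF.2 ⟨hγ', rfl⟩

/-- Contraction package, case 2 (wrap present). -/
lemma pack_cx4 (hk : 2 < k) {m n' x : ℕ} {D : Diagram m}
    (hD : SH k u₁ (u₂+1) D) (hp1 : (x, x+2) ∈ D.arcs) (hp2 : (x+1, x+3) ∈ D.arcs)
    (hw : (x - 1, x + 4) ∈ D.arcs) (hx2 : 2 ≤ x) (hn : m = n' + 4) :
    SH k (u₁+1) u₂ (cxDia (window4 (x-1)) D (sub4 hp1 hp2 hw hx2) hn) ∧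
      (x - 1, x - 1 + 1) ∈ oaF (cxDia (window4 (x-1)) D (sub4 hp1 hp2 hw hx2) hn) := by
  obtain ⟨hsh, hu1, hu2⟩ := hD
  rw [isShape_iff] at hsh
  obtain ⟨hnc, hpf, hnt⟩ := hsh
  set F' := cxDia (window4 (x-1)) D (sub4 hp1 hp2 hw hx2) hn with hF'
  have hγ' : (x - 1, x - 1 + 1) ∈ F'.arcs := cx_gamma _ _ _
  have hE : (exDia (window4 (x-1)) F' hγ' hn).arcs = D.arcs := by
    rw [exDia_arcs]
    have : F'.arcs = cxArcs (x-1) 4 (N4 (x-1)) D.arcs := rfl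
    rw [this]
    exact ex_cx (window4 (x-1)) (sub4 hp1 hp2 hw hx2)
  have hnt' : NoTwo F' := by
    refine cx_notwo (window4 (x-1)) (sub4 hp1 hp2 hw hx2) hn (Or.inl ?_) hnt
    rw [show ((x:ℕ) - 1, x - 1 + 4 + 1) = (x - 1, x - 1 + 5) from pair_eq rfl (by omega)]
    exact mem_N4.2 (Or.inl rfl)
  have h1 : F'.oneArcs = (exDia (window4 (x-1)) F' hγ' hn).oneArcs + 1 :=
    ex_oneArcs (window4 (x-1)) hγ' hn
  have h2 : (exDia (window4 (x-1)) F' hγ' hn).twoArcCrossPairs = F'.twoArcCrossPairs + 1 :=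
    ex_twoArcCrossPairs (window4 (x-1)) hγ' hn (N4_pairs (x-1))
  have e1 : (exDia (window4 (x-1)) F' hγ' hn).oneArcs = u₁ := by
    rw [oneArcs_congr hE, hu1]
  have e2 : (exDia (window4 (x-1)) F' hγ' hn).twoArcCrossPairs = u₂ + 1 := by
    rw [tacp_congr hE, hu2]
  refine ⟨⟨isShape_iff.2 ⟨cx_noncrossing (window4 (x-1)) _ hn (by omega) hnc,
    cx_perfect (window4 (x-1)) _ hn hpf, hnt'⟩, by omega, by omega⟩, ?_⟩
  exact mem_oaF.2 ⟨hγ', rfl⟩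

/-- Expansion package, case 1. -/
lemma pack_ex2 (hk : 2 < k) {n m i : ℕ} {F : Diagram n}
    (hF : SH k (u₁+1) u₂ F) (hγ : (i, i+1) ∈ F.arcs) (hm : m = n + 2) :
    SH k u₁ (u₂+1) (exDia (window2 i) F hγ hm) ∧
      ((i, i+2), (i+1, i+3)) ∈ cpF (exDia (window2 i) F hγ hm) := by
  obtain ⟨hsh, hu1, hu2⟩ := hF
  rw [isShape_iff] at hsh
  obtain ⟨hnc, hpf, hnt⟩ := hsh
  have h1 := ex_oneArcs (window2 i) hγ hm
  have h2 := ex_twoArcCrossPairs (window2 i) hγ hm (N2_pairs i)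
  refine ⟨⟨isShape_iff.2 ⟨ex_noncrossing (window2 i) hγ hm (by omega) hnc,
    ex_perfect (window2 i) hγ hm hpf, ex_notwo (window2 i) hγ hm hnt⟩,
    by omega, by omega⟩, ?_⟩
  rw [ex_cpF (window2 i) hγ hm (N2_pairs i)]
  exact Finset.mem_insert_self _ _

/-- Expansion package, case 2. -/
lemma pack_ex4 (hk : 2 < k) {n m i : ℕ} {F : Diagram n}
    (hF : SH k (u₁+1) u₂ F) (hγ : (i, i+1) ∈ F.arcs) (hm : m = n + 4) :
    SH k u₁ (u₂+1) (exDia (window4 i) F hγ hm) ∧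
      ((i+1, i+3), (i+2, i+4)) ∈ cpF (exDia (window4 i) F hγ hm) := by
  obtain ⟨hsh, hu1, hu2⟩ := hF
  rw [isShape_iff] at hsh
  obtain ⟨hnc, hpf, hnt⟩ := hsh
  have h1 := ex_oneArcs (window4 i) hγ hm
  have h2 := ex_twoArcCrossPairs (window4 i) hγ hm (N4_pairs i)
  refine ⟨⟨isShape_iff.2 ⟨ex_noncrossing (window4 i) hγ hm (by omega) hnc,
    ex_perfect (window4 i) hγ hm hpf, ex_notwo (window4 i) hγ hm hnt⟩,
    by omega, by omega⟩, ?_⟩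
  rw [ex_cpF (window4 i) hγ hm (N4_pairs i)]
  exact Finset.mem_insert_self _ _

end SR
-- ===================== end part D2 =====================


-- ===================== part D3: the bijection =====================
namespace SR
open Diagram

variable {k s u₁ u₂ : ℕ}

abbrev ML (k s u₁ u₂ : ℕ) := {q : Diagram (2*(s+1)) × (Arc × Arc) //
  SH k u₁ (u₂+1) q.1 ∧ q.2 ∈ cpF q.1}
abbrev MR (k n u₁ u₂ : ℕ) := {q : Diagram n × Arc // SH k (u₁+1) u₂ q.1 ∧ q.2 ∈ oaF q.1}

lemma ML_extract {n : ℕ} {D : Diagram n} {p : Arc × Arc} (h : p ∈ cpF D) :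
    (p.1.1, p.1.1+2) ∈ D.arcs ∧ (p.1.1+1, p.1.1+3) ∈ D.arcs ∧
    p = ((p.1.1, p.1.1+2), (p.1.1+1, p.1.1+3)) ∧ 1 ≤ p.1.1 := by
  have hsucc := cp_succ h
  rw [mem_cpF] at h
  obtain ⟨h1, h2, h3, h4, h5, h6⟩ := h
  have e1 : p.1 = (p.1.1, p.1.1+2) := Prod.ext rfl h3
  have e2 : p.2 = (p.1.1+1, p.1.1+3) := Prod.ext hsucc (by omega)
  refine ⟨?_, ?_, Prod.ext e1 e2, ?_⟩
  · rw [← e1]; exact h1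
  · rw [← e2]; exact h2
  · exact arc_pos h1

lemma MR_gamma {n : ℕ} {F : Diagram n} {γ : Arc} (h : γ ∈ oaF F) :
    (γ.1, γ.1 + 1) ∈ F.arcs := by
  rw [mem_oaF] at h
  have e : γ = (γ.1, γ.1+1) := Prod.ext rfl h.2
  rw [← e]
  exact h.1

lemma wrap_x2 {n : ℕ} {D : Diagram n} {x : ℕ} (hx : 1 ≤ x)
    (hw : (x-1, x+4) ∈ D.arcs) : 2 ≤ x := by
  have := arc_pos hw
  simp only at this
  omega

noncomputable def bwd (hk : 2 < k) (hs : 1 ≤ s) :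
    MR k (2*s) u₁ u₂ ⊕ MR k (2*(s-1)) u₁ u₂ → ML k s u₁ u₂
  | Sum.inl r =>
      ⟨(exDia (window2 r.1.2.1) r.1.1 (MR_gamma r.2.2) (by omega),
        ((r.1.2.1, r.1.2.1+2), (r.1.2.1+1, r.1.2.1+3))),
       pack_ex2 hk r.2.1 (MR_gamma r.2.2) (by omega)⟩
  | Sum.inr r =>
      ⟨(exDia (window4 r.1.2.1) r.1.1 (MR_gamma r.2.2) (by omega),
        ((r.1.2.1+1, r.1.2.1+3), (r.1.2.1+2, r.1.2.1+4))),
       pack_ex4 hk r.2.1 (MR_gamma r.2.2) (by omega)⟩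

lemma bwd_inj (hk : 2 < k) (hs : 1 ≤ s) :
    Function.Injective (bwd (k := k) (s := s) (u₁ := u₁) (u₂ := u₂) hk hs) := by
  intro r r' h
  rcases r with ⟨⟨F, γ⟩, hF, hγm⟩ | ⟨⟨F, γ⟩, hF, hγm⟩ <;>
    rcases r' with ⟨⟨F', γ'⟩, hF', hγm'⟩ | ⟨⟨F', γ'⟩, hF', hγm'⟩ <;>
    simp only [bwd] at h <;>
    rw [Subtype.mk.injEq, Prod.mk.injEq] at h
  · -- inl / inl
    have hii : γ.1 = γ'.1 := congrArg (fun z : Arc × Arc => z.1.1) h.2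
    have harcs : exArcs γ.1 2 (N2 γ.1) F.arcs = exArcs γ'.1 2 (N2 γ'.1) F'.arcs :=
      congrArg Diagram.arcs h.1
    have hFF : F.arcs = F'.arcs := by
      have h1 := cx_ex (window2 γ.1) (MR_gamma hγm)
      have h2 := cx_ex (window2 γ'.1) (MR_gamma hγm')
      calc F.arcs = cxArcs γ.1 2 (N2 γ.1) (exArcs γ.1 2 (N2 γ.1) F.arcs) := h1.symm
        _ = F'.arcs := by rw [harcs, hii]; exact h2
    have hγγ : γ = γ' := by
      have e1 : γ = (γ.1, γ.1+1) := Prod.ext rfl (mem_oaF.1 hγm).2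
      have e2 : γ' = (γ'.1, γ'.1+1) := Prod.ext rfl (mem_oaF.1 hγm').2
      rw [e1, e2, hii]
    exact congrArg Sum.inl (Subtype.ext (Prod.ext (diagram_ext hFF) hγγ))
  · -- inl / inr : impossible
    exfalso
    have hii : γ.1 = γ'.1 + 1 := congrArg (fun z : Arc × Arc => z.1.1) h.2
    have harcs : exArcs γ.1 2 (N2 γ.1) F.arcs = exArcs γ'.1 4 (N4 γ'.1) F'.arcs :=
      congrArg Diagram.arcs h.1
    have hwrap : (γ'.1, γ'.1 + 5) ∈ exArcs γ'.1 4 (N4 γ'.1) F'.arcs :=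
      mem_exArcs.2 (Or.inl (mem_N4.2 (Or.inl rfl)))
    rw [← harcs] at hwrap
    have hnt : NoTwo F := (isShape_iff.1 hF.1).2.2
    have e : (γ'.1, γ'.1 + 5) = (γ.1 - 1, γ.1 + 4) := pair_eq (by omega) (by omega)
    rw [e] at hwrap
    exact ex2_no_wrap (MR_gamma hγm) hnt hwrap
  · -- inr / inl : impossible
    exfalso
    have hii : γ.1 + 1 = γ'.1 := congrArg (fun z : Arc × Arc => z.1.1) h.2
    have harcs : exArcs γ.1 4 (N4 γ.1) F.arcs = exArcs γ'.1 2 (N2 γ'.1) F'.arcs :=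
      congrArg Diagram.arcs h.1
    have hwrap : (γ.1, γ.1 + 5) ∈ exArcs γ.1 4 (N4 γ.1) F.arcs :=
      mem_exArcs.2 (Or.inl (mem_N4.2 (Or.inl rfl)))
    rw [harcs] at hwrap
    have hnt : NoTwo F' := (isShape_iff.1 hF'.1).2.2
    have e : (γ.1, γ.1 + 5) = (γ'.1 - 1, γ'.1 + 4) := pair_eq (by omega) (by omega)
    rw [e] at hwrap
    exact ex2_no_wrap (MR_gamma hγm') hnt hwrap
  · -- inr / inr
    have hii : γ.1 = γ'.1 := by
      have := congrArg (fun z : Arc × Arc => z.1.1) h.2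
      simp only at this
      omega
    have harcs : exArcs γ.1 4 (N4 γ.1) F.arcs = exArcs γ'.1 4 (N4 γ'.1) F'.arcs :=
      congrArg Diagram.arcs h.1
    have hFF : F.arcs = F'.arcs := by
      have h1 := cx_ex (window4 γ.1) (MR_gamma hγm)
      have h2 := cx_ex (window4 γ'.1) (MR_gamma hγm')
      calc F.arcs = cxArcs γ.1 4 (N4 γ.1) (exArcs γ.1 4 (N4 γ.1) F.arcs) := h1.symm
        _ = F'.arcs := by rw [harcs, hii]; exact h2
    have hγγ : γ = γ' := by
      have e1 : γ = (γ.1, γ.1+1) := Prod.ext rfl (mem_oaF.1 hγm).2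
      have e2 : γ' = (γ'.1, γ'.1+1) := Prod.ext rfl (mem_oaF.1 hγm').2
      rw [e1, e2, hii]
    exact congrArg Sum.inr (Subtype.ext (Prod.ext (diagram_ext hFF) hγγ))

lemma bwd_surj (hk : 2 < k) (hs : 1 ≤ s) :
    Function.Surjective (bwd (k := k) (s := s) (u₁ := u₁) (u₂ := u₂) hk hs) := by
  rintro ⟨⟨D, p⟩, hD, hpm⟩
  have hpm' : p ∈ cpF D := hpm
  have hD' : SH k u₁ (u₂+1) D := hD
  obtain ⟨hp1, hp2, hpeq, hx1⟩ := ML_extract hpm' 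
  by_cases hw : (p.1.1 - 1, p.1.1 + 4) ∈ D.arcs
  · have hx2 : 2 ≤ p.1.1 := wrap_x2 hx1 hw
    obtain ⟨hsh', hmem'⟩ := pack_cx4 (u₁ := u₁) (u₂ := u₂) hk hD' hp1 hp2 hw hx2
      (by omega : 2*(s+1) = 2*(s-1) + 4)
    refine ⟨Sum.inr ⟨(cxDia (window4 (p.1.1-1)) D (sub4 hp1 hp2 hw hx2) (by omega),
      (p.1.1 - 1, p.1.1 - 1 + 1)), hsh', hmem'⟩, ?_⟩
    simp only [bwd]
    apply Subtype.ext
    apply Prod.ext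
    · apply diagram_ext
      exact ex_cx (window4 (p.1.1-1)) (sub4 hp1 hp2 hw hx2)
    · show ((p.1.1 - 1 + 1, p.1.1 - 1 + 3), (p.1.1 - 1 + 2, p.1.1 - 1 + 4)) = p
      refine Eq.trans ?_ hpeq.symm
      exact Prod.ext (pair_eq (by omega) (by omega)) (pair_eq (by omega) (by omega))
  · obtain ⟨hsh', hmem'⟩ := pack_cx2 (u₁ := u₁) (u₂ := u₂) hk hD' hp1 hp2 hw
      (by omega : 2*(s+1) = 2*s + 2)
    refine ⟨Sum.inl ⟨(cxDia (window2 p.1.1) D (sub2 hp1 hp2) (by omega),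
      (p.1.1, p.1.1 + 1)), hsh', hmem'⟩, ?_⟩
    simp only [bwd]
    apply Subtype.ext
    apply Prod.ext
    · apply diagram_ext
      exact ex_cx (window2 p.1.1) (sub2 hp1 hp2)
    · exact hpeq.symm

def marked_equiv {α β : Type} (P : α → Prop) (f : α → Finset β) :
    {q : α × β // P q.1 ∧ q.2 ∈ f q.1} ≃ Σ a : {a : α // P a}, {b : β // b ∈ f a.1} where
  toFun q := ⟨⟨q.1.1, q.2.1⟩, ⟨q.1.2, q.2.2⟩⟩
  invFun x := ⟨(x.1.1, x.2.1), x.1.2, x.2.2⟩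
  left_inv q := rfl
  right_inv x := rfl

lemma marked_finite {α β : Type} [Finite α] (P : α → Prop) (f : α → Finset β) :
    Finite {q : α × β // P q.1 ∧ q.2 ∈ f q.1} :=
  Finite.of_equiv _ (marked_equiv P f).symm

lemma card_marked {α β : Type} [Finite α] (P : α → Prop) (f : α → Finset β) (c : ℕ)
    (h : ∀ a, P a → (f a).card = c) :
    Nat.card {q : α × β // P q.1 ∧ q.2 ∈ f q.1} = c * Nat.card {a : α // P a} := by
  classical
  rw [Nat.card_congr (marked_equiv P f)]
  haveI : Fintype α := Fintype.ofFinite α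
  rw [Nat.card_eq_fintype_card, Nat.card_eq_fintype_card, Fintype.card_sigma]
  have he : ∀ a : {a : α // P a}, Fintype.card {b : β // b ∈ f a.1} = c := by
    intro a
    rw [Fintype.card_coe]
    exact h a.1 a.2
  simp_rw [he]
  rw [Finset.sum_const, Finset.card_univ, smul_eq_mul, mul_comm]

lemma icount3_eq (k s u₁ u₂ : ℕ) :
    icount3 k s u₁ u₂ = Nat.card {D : Diagram (2*s) // SH k u₁ u₂ D} := rfl

lemma main_recursion (hk : 2 < k) (hs : 1 ≤ s) :
    (u₂ + 1) * icount3 k (s + 1) u₁ (u₂ + 1) =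
      (u₁ + 1) * icount3 k s (u₁ + 1) u₂ + (u₁ + 1) * icount3 k (s - 1) (u₁ + 1) u₂ := by
  classical
  haveI f1 : Finite (ML k s u₁ u₂) :=
    marked_finite (fun D : Diagram (2*(s+1)) => SH k u₁ (u₂+1) D) cpF
  haveI f2 : Finite (MR k (2*s) u₁ u₂) :=
    marked_finite (fun D : Diagram (2*s) => SH k (u₁+1) u₂ D) oaF
  haveI f3 : Finite (MR k (2*(s-1)) u₁ u₂) :=
    marked_finite (fun D : Diagram (2*(s-1)) => SH k (u₁+1) u₂ D) oaF
  have hbij : Function.Bijective (bwd (k := k) (s := s) (u₁ := u₁) (u₂ := u₂) hk hs) :=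
    ⟨bwd_inj hk hs, bwd_surj hk hs⟩
  have hcard : Nat.card (MR k (2*s) u₁ u₂ ⊕ MR k (2*(s-1)) u₁ u₂) =
      Nat.card (ML k s u₁ u₂) := Nat.card_eq_of_bijective _ hbij
  rw [Nat.card_sum] at hcard
  have c1 : Nat.card (ML k s u₁ u₂) = (u₂ + 1) * icount3 k (s+1) u₁ (u₂+1) := by
    rw [icount3_eq]
    exact card_marked _ _ _ (fun D hD => by
      rw [← twoArcCrossPairs_eq]
      exact hD.2.2)
  have c2 : Nat.card (MR k (2*s) u₁ u₂) = (u₁ + 1) * icount3 k s (u₁+1) u₂ := by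
    rw [icount3_eq]
    exact card_marked _ _ _ (fun D hD => by
      rw [← oneArcs_eq]
      exact hD.2.1)
  have c3 : Nat.card (MR k (2*(s-1)) u₁ u₂) = (u₁ + 1) * icount3 k (s-1) (u₁+1) u₂ := by
    rw [icount3_eq]
    exact card_marked _ _ _ (fun D hD => by
      rw [← oneArcs_eq]
      exact hD.2.1)
  rw [← c1, ← hcard, c2, c3]

end SR
-- ===================== end part D3 =====================

/-- For `k > 2`, the shape counts `i_k(s,u₁,u₂)` satisfy
`(u₂+1) i_k(s+1,u₁,u₂+1) = (u₁+1) i_k(s,u₁+1,u₂) + (u₁+1) i_k(s-1,u₁+1,u₂)`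
for `s ≥ 1`, and `i_k(s,u₁,u₂) = 0` whenever `u₁ + 2u₂ > s`. -/
theorem shape_trivariate_recursion (k : ℕ) (hk : 2 < k) :
    (∀ s u₁ u₂ : ℕ, 1 ≤ s →
      (u₂ + 1) * icount3 k (s + 1) u₁ (u₂ + 1) =
        (u₁ + 1) * icount3 k s (u₁ + 1) u₂ +
          (u₁ + 1) * icount3 k (s - 1) (u₁ + 1) u₂) ∧
    (∀ s u₁ u₂ : ℕ, s < u₁ + 2 * u₂ → icount3 k s u₁ u₂ = 0) := by
  constructor
  · intro s u₁ u₂ hs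
    exact SR.main_recursion hk hs
  · intro s u₁ u₂ h
    exact SR.icount3_eq_zero_aux h
end
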